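/- arXiv:1902.04795 — 5 statements merged into one kernel-verified Lean document; each statement's English description precedes it below -/
import Mathlib

section
/- Let ε be a unit in the ring of integers O of a real quadratic field K, p an odd prime unramified in K with residue degree r, and suppose p does not divide (ε - ε̄)². If the generalized Fibonacci sequence is defined by F₀ = 0, F₁ = 1, F_{n+2} = (ε + ε̄)F_{n+1} - N(ε)F_n, and p splits in K (r = 1), then ε^{p-1} - 1 ≢ 0 mod p² if and only if F_{p-1} ≢ 0 mod p². -/
open NumberField

private lemma key_identity {R : Type*} [CommRing R] (A B Fv x : R)
    (h1 : Fv * x = A - B) (h2 : A * B = 1) :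
    Fv * (x * A) = (A - 1) * (A + 1) := by
  linear_combination A * h1 - h2

private lemma fermat_aux {A : Type*} [CommRing A] [IsDomain A] [IsDedekindDomain A]
    (R : Ideal A) [hRm : R.IsMaximal] {p : ℕ} (hp : p.Prime)
    (hcard : Nat.card (A ⧸ R) = p) (z : A) (hz : IsUnit z) :
    z ^ (p - 1) - 1 ∈ R := by
  haveI : Finite (A ⧸ R) := Nat.finite_of_card_ne_zero (by rw [hcard]; exact hp.ne_zero)
  letI : Field (A ⧸ R) := Ideal.Quotient.field R
  haveI : Fintype (A ⧸ R) := Fintype.ofFinite _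
  have hfc : Fintype.card (A ⧸ R) = p := by rw [← Nat.card_eq_fintype_card]; exact hcard
  have hz0 : (Ideal.Quotient.mk R z) ≠ 0 := by
    have h2 := hz.map (Ideal.Quotient.mk R)
    intro h
    rw [h] at h2
    exact not_isUnit_zero h2
  have h3 := FiniteField.pow_card_sub_one_eq_one (Ideal.Quotient.mk R z) hz0
  rw [hfc] at h3
  rw [← Ideal.Quotient.eq_zero_iff_mem, map_sub, map_pow, map_one, h3, sub_self]

set_option maxHeartbeats 2000000 in
/-- `K` a real quadratic field with ring of integers `𝓞 K`,
`ε` a unit with Galois conjugate `ε̄`, `p` an odd prime splitting in `K`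
(residue degree `r = 1`) with `p ∤ (ε - ε̄)²`, and `F` the generalized
Fibonacci sequence `F₀ = 0, F₁ = 1, F_{n+2} = (ε+ε̄)F_{n+1} - N(ε)F_n`.
Then `ε^{p-1} - 1 ≢ 0 (mod p²)` iff `F_{p-1} ≢ 0 (mod p²)`. -/
theorem wieferich_iff_fibonacci_split
    (K : Type*) [Field K] [NumberField K]
    (hdeg : Module.finrank ℚ K = 2) (f : K →+* ℝ)
    (σ : K ≃ₐ[ℚ] K) (hσ : σ ≠ AlgEquiv.refl)
    (ε εb : 𝓞 K) (hε : IsUnit ε) (hconj : (εb : K) = σ (ε : K))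
    (p : ℕ) (hp : p.Prime) (hodd : p ≠ 2)
    (hsplit : ∃ P Q : Ideal (𝓞 K), P.IsPrime ∧ Q.IsPrime ∧ P ≠ Q ∧
      Ideal.span {(p : 𝓞 K)} = P * Q)
    (hnd : ¬ (p : 𝓞 K) ∣ (ε - εb) ^ 2)
    (F : ℕ → 𝓞 K) (h0 : F 0 = 0) (h1 : F 1 = 1)
    (hrec : ∀ n, F (n + 2) = (ε + εb) * F (n + 1) - (ε * εb) * F n) :
    ¬ ((p : 𝓞 K) ^ 2 ∣ ε ^ (p - 1) - 1) ↔ ¬ ((p : 𝓞 K) ^ 2 ∣ F (p - 1)) := by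
  classical
  obtain ⟨P, Q, hP, hQ, hPQne, hPQ⟩ := hsplit
  -- ## Galois theory part
  -- the fixed field of σ
  set H : Subgroup (K ≃ₐ[ℚ] K) := Subgroup.zpowers σ with hH
  have hσ1 : σ ≠ 1 := hσ
  have hord : orderOf σ = 2 ∧
      Module.finrank ℚ (IntermediateField.fixedField H) = 1 := by
    have hartin : Module.finrank (IntermediateField.fixedField H) K = Fintype.card H :=
      (IntermediateField.finrank_fixedField_eq_card H).trans Nat.card_eq_fintype_card
    have hcardH : Fintype.card H = orderOf σ := Fintype.card_zpowers
    have htower : Module.finrank ℚ (IntermediateField.fixedField H) *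
        Module.finrank (IntermediateField.fixedField H) K = 2 := by
      rw [Module.finrank_mul_finrank, hdeg]
    rw [hartin, hcardH] at htower
    have h2 : 2 ≤ orderOf σ := by
      rcases Nat.lt_or_ge (orderOf σ) 2 with h | h
      · interval_cases h' : orderOf σ
        · exfalso; exact (orderOf_eq_zero_iff.mp h').elim (isOfFinOrder_of_finite σ)
        · exact absurd (orderOf_eq_one_iff.mp h') hσ1
      · exact h
    have hpos : 0 < Module.finrank ℚ (IntermediateField.fixedField H) :=
      Module.finrank_pos
    constructor <;> nlinarith
  have hfixbot : IntermediateField.fixedField H = ⊥ :=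
    IntermediateField.finrank_eq_one_iff.mp hord.2
  have hfixQ : ∀ z : K, σ z = z → ∃ q : ℚ, algebraMap ℚ K q = z := by
    intro z hz
    have hmem : z ∈ IntermediateField.fixedField H := by
      intro g
      have hst : σ ∈ MulAction.stabilizer (K ≃ₐ[ℚ] K) z := hz
      exact Subgroup.zpowers_le.2 hst g.2
    rw [hfixbot, IntermediateField.mem_bot] at hmem
    exact hmem
  have hσσ : ∀ z : K, σ (σ z) = z := by
    intro z
    have h2 : σ ^ 2 = 1 := by rw [← hord.1]; exact pow_orderOf_eq_one σ
    calc σ (σ z) = (σ * σ) z := rfl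
    _ = (σ ^ 2) z := by rw [sq]
    _ = z := by rw [h2]; rfl
  have hσεb : σ (εb : K) = (ε : K) := by rw [hconj, hσσ]
  -- ## σ-fixed integral elements are rational integers
  have hint : ∀ z : 𝓞 K, σ (z : K) = (z : K) → ∃ m : ℤ, z = (m : 𝓞 K) := by
    intro z hz
    obtain ⟨q, hq⟩ := hfixQ _ hz
    have hqi : IsIntegral ℤ q := by
      rw [← isIntegral_algebraMap_iff (algebraMap ℚ K).injective, hq]
      exact z.2
    obtain ⟨m, hm⟩ := IsIntegrallyClosed.isIntegral_iff.mp hqi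
    refine ⟨m, ?_⟩
    apply RingOfIntegers.ext
    push_cast
    rw [← hq, ← hm]
    simp
  -- ## ε*εb and ε+εb are rational integers; (ε*εb)^2 = 1
  have hεbu : IsUnit εb := by
    obtain ⟨w, hw⟩ := isUnit_iff_exists_inv.mp hε
    have hwi : IsIntegral ℤ (σ (w : K)) :=
      (RingOfIntegers.isIntegral_coe w).map (σ.toAlgHom.restrictScalars ℤ)
    obtain ⟨w', hw'⟩ : ∃ w' : 𝓞 K, algebraMap (𝓞 K) K w' = σ (w : K) :=
      ⟨⟨σ (w : K), (_root_.mem_integralClosure_iff (R := ℤ) (A := K)).mpr hwi⟩, rfl⟩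
    refine isUnit_iff_exists_inv.mpr ⟨w', ?_⟩
    apply RingOfIntegers.ext
    show algebraMap (𝓞 K) K (εb * w') = algebraMap (𝓞 K) K 1
    simp only [map_mul, map_one, hw']
    rw [RingOfIntegers.coe_eq_algebraMap] at hconj
    rw [hconj, ← map_mul]
    have h3 : algebraMap (𝓞 K) K ε * algebraMap (𝓞 K) K w = algebraMap (𝓞 K) K (ε * w) :=
      (map_mul (algebraMap (𝓞 K) K) ε w).symm
    rw [h3, hw, map_one, map_one]
  obtain ⟨r, hr⟩ := hint (ε * εb) (by push_cast [map_mul]; rw [← hconj, hσεb]; ring)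
  have hr2 : r ^ 2 = 1 := by
    have hb := Module.Free.chooseBasis ℤ (𝓞 K)
    have hnorm : Algebra.norm ℤ ((r : 𝓞 K)) = r ^ 2 := by
      rw [show ((r : 𝓞 K)) = algebraMap ℤ (𝓞 K) r from (map_intCast _ r).symm,
        Algebra.norm_algebraMap_of_basis hb, ← Module.finrank_eq_card_basis hb,
        RingOfIntegers.rank, hdeg]
    have hu : IsUnit ((r : 𝓞 K)) := hr ▸ (hε.mul hεbu)
    have := hu.map (Algebra.norm ℤ)
    rw [hnorm] at this
    rcases Int.isUnit_iff.mp this with h1 | h1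
    · exact h1
    · nlinarith [sq_nonneg r]
  have hn2 : (ε * εb) ^ 2 = 1 := by
    rw [hr]
    exact_mod_cast congrArg (fun t : ℤ => ((t : 𝓞 K))) hr2
  have hnp : (ε * εb) ^ (p - 1) = 1 := by
    obtain ⟨k, hk⟩ := (Nat.Odd.sub_odd (hp.odd_of_ne_two hodd) odd_one)
    rw [show p - 1 = 2 * k by omega, pow_mul, hn2, one_pow]
  -- ## Binet formula
  have hbinet : ∀ k, F k * (ε - εb) = ε ^ k - εb ^ k := by
    have key : ∀ k, F k * (ε - εb) = ε ^ k - εb ^ k ∧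
        F (k + 1) * (ε - εb) = ε ^ (k + 1) - εb ^ (k + 1) := by
      intro k
      induction k with
      | zero =>
        constructor
        · rw [h0]; ring
        · rw [h1]; ring
      | succ n ih =>
        refine ⟨ih.2, ?_⟩
        rw [show n + 1 + 1 = n + 2 from rfl, hrec n]
        linear_combination (ε + εb) * ih.2 - (ε * εb) * ih.1
    exact fun k => (key k).1
  -- ## key identity : F(p-1) * ((ε-εb) * ε^(p-1)) = (ε^(p-1) - 1) * (ε^(p-1) + 1)
  have hkey : F (p - 1) * ((ε - εb) * ε ^ (p - 1)) =
      (ε ^ (p - 1) - 1) * (ε ^ (p - 1) + 1) := by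
    refine key_identity _ _ _ _ (hbinet (p - 1)) ?_
    rw [← mul_pow]
    exact hnp
  -- ## norms of P and Q
  have hNspan : Ideal.absNorm (Ideal.span {(p : 𝓞 K)}) = p ^ 2 := by
    have hb := Module.Free.chooseBasis ℤ (𝓞 K)
    rw [Ideal.absNorm_span_singleton,
      show ((p : 𝓞 K)) = algebraMap ℤ (𝓞 K) (p : ℤ) from by push_cast; rfl,
      Algebra.norm_algebraMap_of_basis hb, ← Module.finrank_eq_card_basis hb,
      RingOfIntegers.rank, hdeg]
    simp [Int.natAbs_pow]
  have hNPQ : Ideal.absNorm P * Ideal.absNorm Q = p ^ 2 := by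
    rw [← _root_.map_mul Ideal.absNorm P Q, ← hPQ, hNspan]
  have hNne1 : ∀ R : Ideal (𝓞 K), R.IsPrime → Ideal.absNorm R ≠ 1 := by
    intro R hR h1
    exact hR.ne_top (Ideal.absNorm_eq_one_iff.mp h1)
  have hNP : Ideal.absNorm P = p := by
    have hdvd : Ideal.absNorm P ∣ p ^ 2 := ⟨_, hNPQ.symm⟩
    obtain ⟨i, hi, he⟩ := (Nat.dvd_prime_pow hp).mp hdvd
    interval_cases i
    · exact absurd (by simpa using he) (hNne1 P hP)
    · simpa using he
    · exfalso
      rw [he] at hNPQ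
      have : Ideal.absNorm Q = 1 :=
        Nat.eq_of_mul_eq_mul_left (pow_pos hp.pos 2) (by rw [hNPQ, mul_one])
      exact hNne1 Q hQ this
  have hNQ : Ideal.absNorm Q = p := by
    rw [hNP] at hNPQ
    have hp0 : p ≠ 0 := hp.ne_zero
    have : p * Ideal.absNorm Q = p * p := by rw [hNPQ]; ring
    exact Nat.eq_of_mul_eq_mul_left (Nat.pos_of_ne_zero hp0) this
  -- ## x := ε - εb is not in P nor Q
  have hpmemP : (p : 𝓞 K) ∈ P := by
    have : (p : 𝓞 K) ∈ Ideal.span {(p : 𝓞 K)} := Ideal.mem_span_singleton_self _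
    rw [hPQ] at this
    exact Ideal.mul_le_left this
  have hpmemQ : (p : 𝓞 K) ∈ Q := by
    have h2 : (p : 𝓞 K) ∈ Ideal.span {(p : 𝓞 K)} := Ideal.mem_span_singleton_self _
    rw [hPQ] at h2
    exact Ideal.mul_le_right h2
  obtain ⟨a, ha⟩ := hint (ε + εb) (by push_cast [map_add]; rw [← hconj, hσεb]; ring)
  have hx2 : (ε - εb) ^ 2 = ((a ^ 2 - 4 * r : ℤ) : 𝓞 K) := by
    have h2 : (ε - εb) ^ 2 = (ε + εb) ^ 2 - 4 * (ε * εb) := by ring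
    rw [h2, ha, hr]
    push_cast
    ring
  -- ## the crucial equivalence modulo R^2 for a prime R over p
  have main : ∀ R : Ideal (𝓞 K), R.IsPrime → (p : 𝓞 K) ∈ R → Ideal.absNorm R = p →
      ((ε ^ (p - 1) - 1 ∈ R ^ 2) ↔ (F (p - 1) ∈ R ^ 2)) := by
    intro R hR hpR hNR
    have hRbot : R ≠ ⊥ := by
      intro h
      rw [h] at hNR
      simp at hNR
      exact hp.ne_zero hNR.symm
    haveI hRm : R.IsMaximal := hR.isMaximal hRbot
    have hZ : ∀ c : ℤ, (c : 𝓞 K) ∈ R → (p : ℤ) ∣ c := by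
      intro c hc
      by_contra hpc
      have hcop : IsCoprime (p : ℤ) c :=
        ((Int.prime_iff_natAbs_prime.mpr (by simpa using hp)).coprime_iff_not_dvd).mpr hpc
      obtain ⟨α, β, hαβ⟩ := hcop
      have h1R : (1 : 𝓞 K) ∈ R := by
        have h2 := R.add_mem (R.mul_mem_left ((α : 𝓞 K)) hpR) (R.mul_mem_left ((β : 𝓞 K)) hc)
        have h3 : ((α : 𝓞 K)) * (p : 𝓞 K) + ((β : 𝓞 K)) * (c : 𝓞 K) = 1 := by
          exact_mod_cast congrArg (fun t : ℤ => ((t : 𝓞 K))) hαβ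
        rwa [h3] at h2
      exact hR.ne_top ((Ideal.eq_top_iff_one R).mpr h1R)
    have hxR : (ε - εb) ∉ R := by
      intro hx
      have h2 : ((a ^ 2 - 4 * r : ℤ) : 𝓞 K) ∈ R := by
        rw [← hx2]
        exact R.pow_mem_of_mem hx 2 (by norm_num)
      have h3 := hZ _ h2
      apply hnd
      rw [hx2]
      simpa using map_dvd (Int.castRingHom (𝓞 K)) h3
    have hunotR : ∀ z : 𝓞 K, IsUnit z → z ∉ R := by
      intro z hz hzR
      exact hR.ne_top (R.eq_top_of_isUnit_mem hzR hz)
    have hA1 : ε ^ (p - 1) - 1 ∈ R := fermat_aux R hp hNR ε hε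
    have hBR : ε ^ (p - 1) + 1 ∉ R := by
      intro hB
      have h2 : ((2 : ℤ) : 𝓞 K) ∈ R := by
        have h3 := R.sub_mem hB hA1
        have h4 : ε ^ (p - 1) + 1 - (ε ^ (p - 1) - 1) = ((2 : ℤ) : 𝓞 K) := by
          push_cast
          ring
        rwa [h4] at h3
      have h5 := hZ 2 h2
      have h6 : (p : ℤ) ∣ 2 → p ∣ 2 := by exact_mod_cast fun h => Int.ofNat_dvd.mp h
      have := (Nat.prime_dvd_prime_iff_eq hp Nat.prime_two).mp (h6 h5)
      exact hodd this
    constructor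
    · intro hA2
      have hABR : ((ε - εb) * ε ^ (p - 1)) * F (p - 1) ∈ R ^ 2 := by
        rw [mul_comm, hkey]
        exact Ideal.mul_mem_right _ _ hA2
      rcases Ideal.IsPrime.mul_mem_pow R hABR with h | h
      · rcases hR.mem_or_mem h with h2 | h2
        · exact absurd h2 hxR
        · exact absurd h2 (hunotR _ (hε.pow _))
      · exact h
    · intro hF2
      have hABR : (ε ^ (p - 1) + 1) * (ε ^ (p - 1) - 1) ∈ R ^ 2 := by
        rw [mul_comm, ← hkey]
        exact Ideal.mul_mem_right _ _ hF2
      rcases Ideal.IsPrime.mul_mem_pow R hABR with h | h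
      · exact absurd h hBR
      · exact h
  -- ## maximality of P and Q
  have hPbot : P ≠ ⊥ := by
    intro h; rw [h] at hNP; simp at hNP; exact hp.ne_zero hNP.symm
  have hQbot : Q ≠ ⊥ := by
    intro h; rw [h] at hNQ; simp at hNQ; exact hp.ne_zero hNQ.symm
  haveI hPm : P.IsMaximal := hP.isMaximal hPbot
  haveI hQm : Q.IsMaximal := hQ.isMaximal hQbot
  -- ## divisibility by p^2 is membership in P^2 and Q^2
  have hmem : ∀ y : 𝓞 K, (p : 𝓞 K) ^ 2 ∣ y ↔ (y ∈ P ^ 2 ∧ y ∈ Q ^ 2) := by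
    intro y
    have hco : IsCoprime P Q :=
      (Ideal.isCoprime_iff_sup_eq).mpr (hPm.coprime_of_ne hQm hPQne)
    have hco2 : P ^ 2 ⊔ Q ^ 2 = ⊤ :=
      (Ideal.isCoprime_iff_sup_eq).mp (IsCoprime.pow hco)
    have h1 : ((p : 𝓞 K) ^ 2 ∣ y) ↔ y ∈ Ideal.span {(p : 𝓞 K) ^ 2} :=
      (Ideal.mem_span_singleton).symm
    rw [h1, ← Ideal.span_singleton_pow, hPQ, mul_pow,
      Ideal.mul_eq_inf_of_coprime hco2, Submodule.mem_inf]
  -- ## conclusion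
  apply not_congr
  rw [hmem, hmem, main P hP hpmemP hNP, main Q hQ hpmemQ hNQ]
end

section
/- Let ε be a unit in the ring of integers O of a real quadratic field K = Q(√d), and p ≥ 5 a prime inert in K with p not dividing (ε - ε̄)². Define F_n = (εⁿ - ε̄ⁿ)/(ε - ε̄). Then ε^{p²-1} - 1 ≢ 0 mod p² if and only if F_{p+1} ≢ 0 mod p². -/
open NumberField

set_option maxHeartbeats 4000000
set_option synthInstance.maxHeartbeats 400000

/-- `K` a real quadratic field, `ε` a unit with conjugate `ε̄`,
`p ≥ 5` a prime inert in `K` with `p ∤ (ε - ε̄)²`, and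
`F_n = (εⁿ - ε̄ⁿ)/(ε - ε̄)`.  Then `ε^{p²-1} - 1 ≢ 0 (mod p²)` iff
`F_{p+1} ≢ 0 (mod p²)`. -/
theorem wieferich_iff_fibonacci_inert
    (K : Type*) [Field K] [NumberField K]
    (hdeg : Module.finrank ℚ K = 2) (f : K →+* ℝ)
    (σ : K ≃ₐ[ℚ] K) (hσ : σ ≠ AlgEquiv.refl)
    (ε εb : 𝓞 K) (hε : IsUnit ε) (hconj : (εb : K) = σ (ε : K))
    (p : ℕ) (hp : p.Prime) (hp5 : 5 ≤ p)
    (hinert : (Ideal.span {(p : 𝓞 K)}).IsPrime)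
    (hnd : ¬ (p : 𝓞 K) ∣ (ε - εb) ^ 2)
    (F : ℕ → 𝓞 K) (hF : ∀ n, (ε - εb) * F n = ε ^ n - εb ^ n) :
    ¬ ((p : 𝓞 K) ^ 2 ∣ ε ^ (p ^ 2 - 1) - 1) ↔ ¬ ((p : 𝓞 K) ^ 2 ∣ F (p + 1)) := by
  classical
  haveI : Fact p.Prime := ⟨hp⟩
  have hcoe : Function.Injective (algebraMap (𝓞 K) K) := RingOfIntegers.coe_injective
  have hP0 : (p : 𝓞 K) ≠ 0 := Nat.cast_ne_zero.mpr hp.ne_zero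
  have hPprime : Prime (p : 𝓞 K) := (Ideal.span_singleton_prime hP0).mp hinert
  -- rational elements of 𝓞 K are integers
  have ratToInt : ∀ (x : 𝓞 K) (r : ℚ), algebraMap ℚ K r = algebraMap (𝓞 K) K x →
      ∃ m : ℤ, (m : 𝓞 K) = x ∧ (m : ℚ) = r := by
    intro x r hr
    have hint : IsIntegral ℤ r := by
      rw [← isIntegral_algebraMap_iff (R := ℤ) (algebraMap ℚ K).injective, hr]
      exact x.isIntegral_coe
    obtain ⟨m, hm⟩ := IsIntegrallyClosed.isIntegral_iff.mp hint
    refine ⟨m, hcoe ?_, by exact_mod_cast hm⟩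
    rw [← hr, ← hm]
    simp [map_intCast]
  have hIntDvd : ∀ m : ℤ, (p : 𝓞 K) ∣ (m : 𝓞 K) → (p : ℤ) ∣ m := by
    intro m ⟨x, hx⟩
    have hxK : algebraMap ℚ K ((m : ℚ) / (p : ℚ)) = algebraMap (𝓞 K) K x := by
      have h1 : (m : K) = (p : K) * algebraMap (𝓞 K) K x := by
        have := congrArg (algebraMap (𝓞 K) K) hx
        push_cast at this ⊢
        exact this
      have hpK : (algebraMap ℚ K) ((p : ℕ) : ℚ) ≠ 0 := by
        rw [map_natCast]
        exact_mod_cast Nat.cast_ne_zero.mpr hp.ne_zero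
      rw [map_div₀, div_eq_iff hpK, map_intCast, map_natCast]
      linear_combination h1
    obtain ⟨c, _, hc2⟩ := ratToInt x ((m : ℚ) / (p : ℚ)) hxK
    have : (p : ℚ) * (c : ℚ) = (m : ℚ) := by
      rw [hc2, mul_div_cancel₀]
      exact_mod_cast Nat.cast_ne_zero.mpr hp.ne_zero
    exact ⟨c, by exact_mod_cast this.symm⟩
  -- the conjugation on 𝓞 K
  set σO : 𝓞 K ≃ₐ[ℤ] 𝓞 K := galRestrict ℤ ℚ K (𝓞 K) σ with hσOdef
  have hσO : ∀ x : 𝓞 K, algebraMap (𝓞 K) K (σO x) = σ (algebraMap (𝓞 K) K x) :=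
    fun x => algebraMap_galRestrict_apply ℤ σ x
  have hσε : σO ε = εb := hcoe (by rw [hσO]; exact hconj.symm)
  set π : 𝓞 K := ε - εb with hπdef
  have hπnd : ¬ (p : 𝓞 K) ∣ π := fun h => hnd (h.trans (dvd_pow_self _ two_ne_zero))
  have h2nd : ¬ (p : 𝓞 K) ∣ (2 : 𝓞 K) := by
    intro h
    have h2 : (p : ℤ) ∣ 2 := hIntDvd 2 (by exact_mod_cast h)
    have := Int.le_of_dvd (by norm_num) h2
    omega
  have hkey : ∀ c : ℤ, ¬ (p : 𝓞 K) ∣ (2 * ε - (c : 𝓞 K)) := by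
    intro c h
    have h2 : (p : 𝓞 K) ∣ (2 * εb - (c : 𝓞 K)) := by
      obtain ⟨y, hy⟩ := h
      refine ⟨σO y, ?_⟩
      have := congrArg σO hy
      simpa [map_sub, map_mul, map_ofNat, map_intCast, map_natCast, hσε] using this
    have h3 : (p : 𝓞 K) ∣ 2 * π := by
      have := dvd_sub h h2
      have heq : 2 * ε - (c : 𝓞 K) - (2 * εb - (c : 𝓞 K)) = 2 * π := by
        rw [hπdef]; ring
      rwa [heq] at this
    rcases hPprime.2.2 _ _ h3 with h4 | h4
    · exact h2nd h4
    · exact hπnd h4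
  -- minimal polynomial: trace and norm are rational integers
  have hεint : IsIntegral ℚ (algebraMap (𝓞 K) K ε) := IsIntegral.of_finite ℚ _
  set Pm : Polynomial ℚ := minpoly ℚ (algebraMap (𝓞 K) K ε) with hPmdef
  have hmonic : Pm.Monic := minpoly.monic hεint
  have hdeg2 : Pm.natDegree ≤ 2 := hdeg ▸ minpoly.natDegree_le _
  have hroot1 : Polynomial.aeval (algebraMap (𝓞 K) K ε) Pm = 0 := minpoly.aeval ℚ _
  have hconj' : algebraMap (𝓞 K) K εb = σ (algebraMap (𝓞 K) K ε) := hconj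
  have hroot2 : Polynomial.aeval (algebraMap (𝓞 K) K εb) Pm = 0 := by
    rw [hconj', Polynomial.aeval_algHom_apply σ (algebraMap (𝓞 K) K ε) Pm, hroot1, map_zero]
  have hne : algebraMap (𝓞 K) K ε ≠ algebraMap (𝓞 K) K εb := by
    intro h
    have heb : ε = εb := hcoe h
    apply hnd
    have hπ0 : π = 0 := by rw [hπdef, heb]; ring
    rw [hπ0]
    simp
  have hd2 : Pm.natDegree = 2 := by
    have h0 : Pm.natDegree ≠ 0 := by
      intro h
      have h1 := hmonic.natDegree_eq_zero.mp h
      rw [h1] at hroot1; simp at hroot1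
    have h1 : Pm.natDegree ≠ 1 := by
      intro h
      have hX := hmonic.eq_X_add_C h
      rw [hX] at hroot1 hroot2
      simp only [map_add, Polynomial.aeval_X, Polynomial.aeval_C] at hroot1 hroot2
      apply hne
      have e1 : algebraMap (𝓞 K) K ε = -(algebraMap ℚ K (Pm.coeff 0)) := by
        linear_combination hroot1
      have e2 : algebraMap (𝓞 K) K εb = -(algebraMap ℚ K (Pm.coeff 0)) := by
        linear_combination hroot2
      rw [e1, e2]
    omega
  have hq : ∀ x : K, Polynomial.aeval x Pm
      = algebraMap ℚ K (Pm.coeff 0) + algebraMap ℚ K (Pm.coeff 1) * x + x ^ 2 := by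
    intro x
    have h3 : Pm.natDegree < 3 := by omega
    have hc2 : Pm.coeff 2 = 1 := by
      have := hmonic.coeff_natDegree
      rwa [hd2] at this
    conv_lhs => rw [Pm.as_sum_range' 3 h3]
    rw [map_sum, Finset.sum_range_succ, Finset.sum_range_succ, Finset.sum_range_succ,
      Finset.sum_range_zero]
    simp only [Polynomial.aeval_monomial, hc2, map_one, one_mul, zero_add, pow_zero, pow_one,
      mul_one]
    try ring
  rw [hq] at hroot1 hroot2
  set eK := algebraMap (𝓞 K) K ε with heKdef
  set ebK := algebraMap (𝓞 K) K εb with hebKdef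
  have hsum0 : eK + ebK + algebraMap ℚ K (Pm.coeff 1) = 0 := by
    have hfac : (eK - ebK) * (eK + ebK + algebraMap ℚ K (Pm.coeff 1)) = 0 := by
      linear_combination hroot1 - hroot2
    rcases mul_eq_zero.mp hfac with h | h
    · exact absurd (sub_eq_zero.mp h) hne
    · exact h
  have hprodK : eK * ebK = algebraMap ℚ K (Pm.coeff 0) := by
    linear_combination eK * hsum0 - hroot1
  obtain ⟨T, hT, -⟩ := ratToInt (ε + εb) (-(Pm.coeff 1)) (by
    rw [map_neg, map_add]
    linear_combination -hsum0)
  obtain ⟨N, hN, -⟩ := ratToInt (ε * εb) (Pm.coeff 0) (by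
    rw [map_mul]
    exact hprodK.symm)
  -- εb is a unit and N = ±1
  have hεbU : IsUnit εb := by
    obtain ⟨un, hu⟩ := hε
    have hinv : IsIntegral ℤ (σ (algebraMap (𝓞 K) K ((un⁻¹ : (𝓞 K)ˣ) : 𝓞 K))) :=
      (((un⁻¹ : (𝓞 K)ˣ) : 𝓞 K).isIntegral_coe).map (σ.toAlgHom.restrictScalars ℤ)
    refine IsUnit.of_mul_eq_one (a := εb) (σO ((un⁻¹ : (𝓞 K)ˣ) : 𝓞 K)) (hcoe ?_)
    rw [map_mul, map_one, hσO]
    rw [show algebraMap (𝓞 K) K εb = σ (algebraMap (𝓞 K) K ε) from hconj]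
    show σ (algebraMap (𝓞 K) K ε) * σ (algebraMap (𝓞 K) K ((un⁻¹ : (𝓞 K)ˣ) : 𝓞 K)) = 1
    rw [← map_mul, ← map_mul]
    have h1 : ε * ((un⁻¹ : (𝓞 K)ˣ) : 𝓞 K) = 1 := by
      rw [← hu]
      simp
    rw [h1, map_one, map_one]
  have hnU : IsUnit (ε * εb) := hε.mul hεbU
  have hn2 : (ε * εb) ^ 2 = 1 := by
    obtain ⟨y, hy⟩ := (hN ▸ hnU).exists_right_inv
    have hyK : (N : K) * algebraMap (𝓞 K) K y = 1 := by
      have := congrArg (algebraMap (𝓞 K) K) hy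
      rw [map_mul, map_one, map_intCast] at this
      exact this
    have hNne : (N : ℚ) ≠ 0 := by
      intro h0
      have hNK : (N : K) = 0 := by exact_mod_cast h0
      rw [hNK, zero_mul] at hyK
      exact one_ne_zero hyK.symm
    obtain ⟨M, -, hM2⟩ := ratToInt y ((N : ℚ)⁻¹) (by
      rw [map_inv₀]
      rw [map_intCast]
      exact (eq_inv_of_mul_eq_one_right hyK).symm)
    have hNM : N * M = 1 := by
      have hq1 : (N : ℚ) * (M : ℚ) = 1 := by
        rw [hM2, mul_inv_cancel₀ hNne]
      exact_mod_cast hq1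
    have hN1 : N = 1 ∨ N = -1 := Int.isUnit_iff.mp (IsUnit.of_mul_eq_one (a := N) M hNM)
    have hNsq : ((N : ℤ) : 𝓞 K) ^ 2 = 1 := by
      rcases hN1 with h | h <;> rw [h] <;> push_cast <;> ring
    rwa [hN] at hNsq
  -- the quotient ring mod p
  set I : Ideal (𝓞 K) := Ideal.span {(p : 𝓞 K)} with hIdef
  haveI : I.IsPrime := hinert
  have hmk : ∀ x : 𝓞 K, Ideal.Quotient.mk I x = 0 ↔ (p : 𝓞 K) ∣ x := fun x => by
    rw [Ideal.Quotient.eq_zero_iff_mem, hIdef, Ideal.mem_span_singleton]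
  haveI hch : CharP (𝓞 K ⧸ I) p := by
    constructor
    intro a
    have hcast : ((a : ℕ) : 𝓞 K ⧸ I) = Ideal.Quotient.mk I ((a : ℕ) : 𝓞 K) := by
      push_cast; rfl
    rw [hcast, hmk]
    constructor
    · intro h
      have h2 := hIntDvd a (by exact_mod_cast h)
      exact_mod_cast h2
    · intro h
      exact_mod_cast Nat.cast_dvd_cast (α := 𝓞 K) h
  haveI : ExpChar (𝓞 K ⧸ I) p := expChar_prime _ p
  have hmkZ : ∀ m : ℤ, (p : ℤ) ∣ m → ((m : ℤ) : 𝓞 K ⧸ I) = 0 := by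
    intro m hm
    have h1 : Ideal.Quotient.mk I ((m : ℤ) : 𝓞 K) = 0 := by
      rw [hmk]
      obtain ⟨c, rfl⟩ := hm
      refine ⟨(c : 𝓞 K), ?_⟩
      push_cast
      ring
    rw [← h1]; push_cast; rfl
  have hmkpow : ∀ m : ℤ, ((m : ℤ) : 𝓞 K ⧸ I) ^ p = ((m : ℤ) : 𝓞 K ⧸ I) := by
    intro m
    have hdv : (p : ℤ) ∣ m ^ p - m := by
      rw [← ZMod.intCast_zmod_eq_zero_iff_dvd]
      push_cast
      rw [ZMod.pow_card]
      ring
    have h0 := hmkZ _ hdv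
    push_cast at h0
    exact sub_eq_zero.mp h0
  -- discriminant and Euler's criterion
  set D : ℤ := T ^ 2 - 4 * N with hDdef
  have hπ2D : π ^ 2 = ((D : ℤ) : 𝓞 K) := by
    have h1 : ((D : ℤ) : 𝓞 K) = ((T : ℤ) : 𝓞 K) ^ 2 - 4 * ((N : ℤ) : 𝓞 K) := by
      rw [hDdef]; push_cast; ring
    rw [h1, hT, hN, hπdef]; ring
  obtain ⟨k, hk⟩ : ∃ k, p = 2 * k + 1 := hp.odd_of_ne_two (by omega)
  have hk2 : 2 ≤ k := by omega
  have hDp : ¬ (p : ℤ) ∣ D := by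
    intro h
    apply hnd
    rw [hπ2D]
    obtain ⟨c, hc⟩ := h
    exact ⟨(c : 𝓞 K), by rw [hc]; push_cast; ring⟩
  have hD0 : (D : ZMod p) ≠ 0 := by
    rw [Ne, ZMod.intCast_zmod_eq_zero_iff_dvd]
    exact hDp
  have hsplit : (p : ℤ) ∣ D ^ k - 1 ∨ (p : ℤ) ∣ D ^ k + 1 := by
    have he2 : ((D : ZMod p)) ^ (2 * k) = 1 := by
      have hpe : 2 * k = p - 1 := by omega
      rw [hpe]
      exact ZMod.pow_card_sub_one_eq_one hD0
    have hz : (((D ^ k - 1) * (D ^ k + 1) : ℤ) : ZMod p) = 0 := by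
      push_cast
      have h1 : (D : ZMod p) ^ k * (D : ZMod p) ^ k = 1 := by
        rw [← pow_add, show k + k = 2 * k by ring]
        exact he2
      linear_combination h1
    rw [ZMod.intCast_zmod_eq_zero_iff_dvd] at hz
    have hpZ : Prime (p : ℤ) := Nat.prime_iff_prime_int.mp hp
    exact hpZ.2.2 _ _ hz
  -- Frobenius: ε^p ≡ εb and εb^p ≡ ε mod p
  have hfrob : (p : 𝓞 K) ∣ ε ^ p - εb ∧ (p : 𝓞 K) ∣ εb ^ p - ε := by
    have hπp : π ^ p = π * ((D ^ k : ℤ) : 𝓞 K) := by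
      have h1 : π ^ p = π * (π ^ 2) ^ k := by
        rw [hk, pow_succ, pow_mul, mul_comm]
      rw [h1, hπ2D]
      push_cast; ring
    rcases hsplit with hcase | hcase
    · exfalso
      have hsqrt : ∃ a : ℤ, (p : ℤ) ∣ a ^ 2 - D := by
        have hsq : IsSquare (D : ZMod p) := by
          rw [ZMod.euler_criterion p hD0]
          have hpk : p / 2 = k := by omega
          rw [hpk]
          have h1 := (ZMod.intCast_zmod_eq_zero_iff_dvd (D ^ k - 1) p).mpr hcase
          push_cast at h1
          linear_combination h1
        obtain ⟨y, hy⟩ := hsq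
        refine ⟨(y.val : ℤ), ?_⟩
        rw [← ZMod.intCast_zmod_eq_zero_iff_dvd]
        push_cast
        rw [ZMod.natCast_val, ZMod.cast_id, hy]; ring
      obtain ⟨a, ha⟩ := hsqrt
      have hfac : (p : 𝓞 K) ∣ (π - (a : 𝓞 K)) * (π + (a : 𝓞 K)) := by
        obtain ⟨m, hm⟩ := ha
        refine ⟨-((m : ℤ) : 𝓞 K), ?_⟩
        have hcst : ((a : ℤ) : 𝓞 K) ^ 2 - ((D : ℤ) : 𝓞 K) = (p : 𝓞 K) * ((m : ℤ) : 𝓞 K) := by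
          have h1 := congrArg (fun z : ℤ => ((z : ℤ) : 𝓞 K)) hm
          push_cast at h1
          push_cast
          exact h1
        have h2 : (π - (a : 𝓞 K)) * (π + (a : 𝓞 K)) = π ^ 2 - ((a : ℤ) : 𝓞 K) ^ 2 := by
          push_cast; ring
        rw [h2, hπ2D]
        linear_combination -hcst
      rcases hPprime.2.2 _ _ hfac with h | h
      · apply hkey (T + a)
        have heq : 2 * ε - ((T + a : ℤ) : 𝓞 K) = π - (a : 𝓞 K) := by
          rw [hπdef]
          push_cast
          have h1 : ((T : ℤ) : 𝓞 K) = ε + εb := hT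
          linear_combination -h1
        rw [heq]; exact h
      · apply hkey (T - a)
        have heq : 2 * ε - ((T - a : ℤ) : 𝓞 K) = π + (a : 𝓞 K) := by
          rw [hπdef]
          push_cast
          have h1 : ((T : ℤ) : 𝓞 K) = ε + εb := hT
          linear_combination -h1
        rw [heq]; exact h
    · -- the inert case : D^k ≡ -1
      have hDm1 : ((D ^ k : ℤ) : 𝓞 K ⧸ I) = -1 := by
        have h0 := hmkZ _ hcase
        push_cast at h0 ⊢
        linear_combination h0
      have hmkπp : (Ideal.Quotient.mk I π) ^ p = -(Ideal.Quotient.mk I π) := by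
        have h1 := congrArg (Ideal.Quotient.mk I) hπp
        rw [map_pow, map_mul] at h1
        rw [h1]
        have hcst : Ideal.Quotient.mk I ((D ^ k : ℤ) : 𝓞 K) = ((D ^ k : ℤ) : 𝓞 K ⧸ I) := by
          push_cast; rfl
        rw [hcst, hDm1]; ring
      have hTR : Ideal.Quotient.mk I ((T : ℤ) : 𝓞 K) = ((T : ℤ) : 𝓞 K ⧸ I) := by
        push_cast; rfl
      have hTval : ((T : ℤ) : 𝓞 K ⧸ I)
          = Ideal.Quotient.mk I ε + Ideal.Quotient.mk I εb := by
        rw [← hTR, hT, map_add]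
      have h2R : ((2 : ℤ) : 𝓞 K ⧸ I) = (2 : 𝓞 K ⧸ I) := by push_cast; rfl
      have h2ne : (2 : 𝓞 K ⧸ I) ≠ 0 := by
        intro h0
        have h1 : ((2 : ℕ) : 𝓞 K ⧸ I) = 0 := by push_cast; exact_mod_cast h0
        rw [CharP.cast_eq_zero_iff (𝓞 K ⧸ I) p 2] at h1
        have := Nat.le_of_dvd (by norm_num) h1
        omega
      have h2p : (2 : 𝓞 K ⧸ I) ^ p = 2 := by
        have h1 := hmkpow 2
        rwa [h2R] at h1
      constructor
      · have hlhs : (((T : ℤ) : 𝓞 K ⧸ I) + Ideal.Quotient.mk I π) ^ p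
            = ((T : ℤ) : 𝓞 K ⧸ I) ^ p + (Ideal.Quotient.mk I π) ^ p := add_pow_char _ _ _
        have h2e : ((T : ℤ) : 𝓞 K ⧸ I) + Ideal.Quotient.mk I π
            = 2 * Ideal.Quotient.mk I ε := by
          rw [hTval, hπdef, map_sub]; ring
        rw [h2e, mul_pow, h2p, hmkpow T, hmkπp] at hlhs
        have hrhs : ((T : ℤ) : 𝓞 K ⧸ I) - Ideal.Quotient.mk I π
            = 2 * Ideal.Quotient.mk I εb := by
          rw [hTval, hπdef, map_sub]; ring
        have hmain : (2 : 𝓞 K ⧸ I) * ((Ideal.Quotient.mk I ε) ^ p - Ideal.Quotient.mk I εb)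
            = 0 := by
          linear_combination hlhs + hrhs
        rcases mul_eq_zero.mp hmain with h0 | h0
        · exact absurd h0 h2ne
        · apply (hmk _).mp
          rw [map_sub, map_pow]
          exact h0
      · have hlhs : (((T : ℤ) : 𝓞 K ⧸ I) + (-(Ideal.Quotient.mk I π))) ^ p
            = ((T : ℤ) : 𝓞 K ⧸ I) ^ p + (-(Ideal.Quotient.mk I π)) ^ p := add_pow_char _ _ _
        have h2e : ((T : ℤ) : 𝓞 K ⧸ I) + (-(Ideal.Quotient.mk I π))
            = 2 * Ideal.Quotient.mk I εb := by
          rw [hTval, hπdef, map_sub]; ring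
        have hneg : (-(Ideal.Quotient.mk I π)) ^ p = Ideal.Quotient.mk I π := by
          have hodd : Odd p := ⟨k, by omega⟩
          rw [hodd.neg_pow, hmkπp]; ring
        rw [h2e, mul_pow, h2p, hmkpow T, hneg] at hlhs
        have hrhs : ((T : ℤ) : 𝓞 K ⧸ I) + Ideal.Quotient.mk I π
            = 2 * Ideal.Quotient.mk I ε := by
          rw [hTval, hπdef, map_sub]; ring
        have hmain : (2 : 𝓞 K ⧸ I) * ((Ideal.Quotient.mk I εb) ^ p - Ideal.Quotient.mk I ε)
            = 0 := by
          linear_combination hlhs + hrhs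
        rcases mul_eq_zero.mp hmain with h0 | h0
        · exact absurd h0 h2ne
        · apply (hmk _).mp
          rw [map_sub, map_pow]
          exact h0
  -- divisibility bookkeeping lemmas
  have L3 : ∀ (a x y : 𝓞 K), a ∣ x - y → (a ∣ x ↔ a ∣ y) := by
    intro a x y h
    constructor
    · intro hx
      have h1 := dvd_sub hx h
      simpa using h1
    · intro hy
      have h1 := dvd_add h hy
      simpa using h1
  have L4 : ∀ (c x : 𝓞 K), ¬ (p : 𝓞 K) ∣ c → ((p : 𝓞 K) ^ 2 ∣ c * x ↔ (p : 𝓞 K) ^ 2 ∣ x) := by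
    intro c x hc
    constructor
    · intro h
      have hx : (p : 𝓞 K) ∣ x := by
        have h1 : (p : 𝓞 K) ∣ c * x := dvd_trans (dvd_pow_self _ two_ne_zero) h
        rcases hPprime.2.2 _ _ h1 with h' | h'
        · exact absurd h' hc
        · exact h'
      obtain ⟨x', rfl⟩ := hx
      have h2 : (p : 𝓞 K) * (p : 𝓞 K) ∣ (p : 𝓞 K) * (c * x') := by
        rw [← pow_two]
        have h3 : (p : 𝓞 K) * (c * x') = c * ((p : 𝓞 K) * x') := by ring
        rw [h3]
        exact h
      have h3 : (p : 𝓞 K) ∣ c * x' := (mul_dvd_mul_iff_left hP0).mp h2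
      rcases hPprime.2.2 _ _ h3 with h' | h'
      · exact absurd h' hc
      · rw [pow_two]
        exact mul_dvd_mul_left _ h'
    · exact fun h => h.mul_left c
  -- binomial expansion
  have bin : ∀ (x y d : 𝓞 K), x = y + d → ∀ j : ℕ,
      ∃ m, x ^ (j + 1) = y ^ (j + 1) + ((j : 𝓞 K) + 1) * y ^ j * d + d ^ 2 * m := by
    intro x y d hx j
    induction j with
    | zero => exact ⟨0, by push_cast; linear_combination hx⟩
    | succ j ih =>
      obtain ⟨m, hm⟩ := ih
      refine ⟨((j : 𝓞 K) + 1) * y ^ j + x * m, ?_⟩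
      have hstep : x ^ (j + 1 + 1) = x * x ^ (j + 1) := by ring
      rw [hstep, hm]
      push_cast
      linear_combination (y ^ (j + 1) + ((j : 𝓞 K) + 1) * y ^ j * d) * hx
  -- main computation
  set u : 𝓞 K := ε ^ (p + 1) with hudef
  set v : 𝓞 K := εb ^ (p + 1) with hvdef
  set n : 𝓞 K := ε * εb with hndef
  set w : 𝓞 K := u - n with hwdef
  have hw : (p : 𝓞 K) ∣ w := by
    have heq : w = ε * (ε ^ p - εb) := by
      rw [hwdef, hudef, hndef, pow_succ]; ring
    rw [heq]
    exact hfrob.1.mul_left ε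
  have hv : (p : 𝓞 K) ∣ v - n := by
    have heq : v - n = εb * (εb ^ p - ε) := by
      rw [hvdef, hndef, pow_succ]; ring
    rw [heq]
    exact hfrob.2.mul_left εb
  have huv : u * v = 1 := by
    rw [hudef, hvdef, ← mul_pow, show p + 1 = 2 * (k + 1) by omega, pow_mul, hn2, one_pow]
  have h4 : (p : 𝓞 K) ^ 2 ∣ 2 - n * (u + v) := by
    have heq : w * (v - n) = 2 - n * (u + v) := by
      rw [hwdef, hndef]
      linear_combination huv + hn2
    rw [← heq, pow_two]
    exact mul_dvd_mul hw hv
  have h5 : (p : 𝓞 K) ^ 2 ∣ (u - v) - 2 * w := by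
    have heq : (u - v) - 2 * w = n * (2 - n * (u + v)) := by
      rw [hwdef, hndef]
      linear_combination (u + v) * hn2
    rw [heq]
    exact h4.mul_left n
  obtain ⟨m, hbin⟩ := bin u n w (by rw [hwdef]; ring) (2 * k - 1)
  rw [show 2 * k - 1 + 1 = 2 * k by omega] at hbin
  have hn2k : n ^ (2 * k) = 1 := by
    rw [pow_mul, hndef, hn2, one_pow]
  have hn2k1 : n ^ (2 * k - 1) = n := by
    rw [show 2 * k - 1 = 2 * (k - 1) + 1 by omega, pow_succ, pow_mul, hndef, hn2, one_pow,
      one_mul]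
  have hcoef : ((2 * k - 1 : ℕ) : 𝓞 K) + 1 = ((2 * k : ℕ) : 𝓞 K) := by
    rw [show (2 * k : ℕ) = (2 * k - 1 : ℕ) + 1 by omega]
    push_cast
    ring
  rw [hcoef, hn2k, hn2k1] at hbin
  have hA : ε ^ (p ^ 2 - 1) - 1 = ((2 * k : ℕ) : 𝓞 K) * n * w + w ^ 2 * m := by
    have hexp : p ^ 2 - 1 = (p + 1) * (2 * k) := by
      have h1 : p ^ 2 = (p + 1) * (2 * k) + 1 := by rw [hk]; ring
      omega
    rw [hexp, pow_mul, ← hudef]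
    linear_combination hbin
  have hcnd : ¬ (p : 𝓞 K) ∣ ((2 * k : ℕ) : 𝓞 K) * n := by
    intro h
    rcases hPprime.2.2 _ _ h with h' | h'
    · have h2 : (p : ℤ) ∣ ((2 * k : ℕ) : ℤ) := by
        apply hIntDvd
        exact_mod_cast h'
      have h3 := Int.le_of_dvd (by positivity) h2
      omega
    · exact hPprime.not_unit (isUnit_of_dvd_unit h' (hndef ▸ hnU))
  have hstep1 : (p : 𝓞 K) ^ 2 ∣ ε ^ (p ^ 2 - 1) - 1
      ↔ (p : 𝓞 K) ^ 2 ∣ ((2 * k : ℕ) : 𝓞 K) * n * w := by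
    apply L3
    rw [hA]
    have heq : ((2 * k : ℕ) : 𝓞 K) * n * w + w ^ 2 * m - ((2 * k : ℕ) : 𝓞 K) * n * w
        = w ^ 2 * m := by ring
    rw [heq]
    exact (pow_dvd_pow_of_dvd hw 2).mul_right m
  have hstep2 : (p : 𝓞 K) ^ 2 ∣ ((2 * k : ℕ) : 𝓞 K) * n * w ↔ (p : 𝓞 K) ^ 2 ∣ w :=
    L4 _ _ hcnd
  have hstep3 : (p : 𝓞 K) ^ 2 ∣ w ↔ (p : 𝓞 K) ^ 2 ∣ 2 * w := (L4 2 w h2nd).symm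
  have hstep4 : (p : 𝓞 K) ^ 2 ∣ 2 * w ↔ (p : 𝓞 K) ^ 2 ∣ u - v := by
    apply L3
    have heq : 2 * w - (u - v) = -((u - v) - 2 * w) := by ring
    rw [heq]
    exact dvd_neg.mpr h5 
  have hstep5 : u - v = π * F (p + 1) := by
    rw [hudef, hvdef]
    exact (hF (p + 1)).symm
  have hstep6 : (p : 𝓞 K) ^ 2 ∣ π * F (p + 1) ↔ (p : 𝓞 K) ^ 2 ∣ F (p + 1) :=
    L4 _ _ hπnd
  apply not_congr
  rw [hstep1, hstep2, hstep3, hstep4, hstep5, hstep6]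
end

section
/- Let a, b be integers with b = ±1, and let F be the sequence F₀ = 0, F₁ = 1, F_{n+2} = a·F_{n+1} - b·F_n. For a prime p not dividing a² - 4b, if k(p) ≠ k(p²) then F_{p-(D/p)} ≢ 0 mod p², where D = a² - 4b and k(m) is the period of F mod m. -/
theorem fib_add (a b : ℤ) (F : ℕ → ℤ) (h0 : F 0 = 0) (h1 : F 1 = 1)
    (hrec : ∀ n, F (n + 2) = a * F (n + 1) - b * F n) :
    ∀ m n, F (m + n + 1) = F (m + 1) * F (n + 1) - b * F m * F n := by
  intro m
  induction m using Nat.twoStepInduction with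
  | zero => intro n; simp [h0, h1]
  | one =>
    intro n
    have h2 : F 2 = a := by have := hrec 0; simp [h0, h1] at this; simpa using this
    have e : 1 + n + 1 = n + 2 := by omega
    rw [e, hrec n, h2, h1]; ring
  | more m ih1 ih2 =>
    intro n
    have e1 : m + 2 + n + 1 = (m + n + 1) + 2 := by omega
    have e2 : m + 1 + n + 1 = (m + n + 1) + 1 := by omega
    rw [e1, hrec (m + n + 1)]
    have e3 : m + n + 1 + 1 = (m + 1) + n + 1 := by omega
    rw [e3, ih2 n, ih1 n]
    rw [show m + 1 + 1 = m + 2 from rfl, show m + 2 + 1 = m + 1 + 2 from rfl,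
      hrec (m + 1), hrec m]
    ring

theorem fib_cassini (a b : ℤ) (F : ℕ → ℤ) (h0 : F 0 = 0) (h1 : F 1 = 1)
    (hrec : ∀ n, F (n + 2) = a * F (n + 1) - b * F n) :
    ∀ n, F (n + 2) * F n - F (n + 1) ^ 2 = -b ^ n := by
  intro n
  induction n with
  | zero => simp [h0, h1]
  | succ n ih =>
    have h2 := hrec n
    have h3 := hrec (n + 1)
    have e : n + 1 + 2 = n + 3 := by omega
    have e2 : n + 1 + 1 = n + 2 := by omega
    rw [e, e2]
    have h3' : F (n + 3) = a * F (n + 2) - b * F (n + 1) := by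
      have : n + 3 = (n + 1) + 2 := by omega
      rw [this]; simpa using h3
    linear_combination F (n+1) * h3' - F (n+2) * h2 + b * ih

theorem fib_shift (a b : ℤ) (F : ℕ → ℤ) (h0 : F 0 = 0) (h1 : F 1 = 1)
    (hrec : ∀ n, F (n + 2) = a * F (n + 1) - b * F n)
    (M c : ℤ) (k : ℕ) (hk0 : M ∣ F k) (hk1 : M ∣ F (k + 1) - c) :
    ∀ n, M ∣ F (n + k) - c * F n := by
  intro n
  induction n using Nat.twoStepInduction with
  | zero => simpa [h0] using hk0
  | one =>
    have e : 1 + k = k + 1 := by omega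
    rw [e, h1]
    simpa using hk1
  | more n ih1 ih2 =>
    have e1 : n + 2 + k = (n + k) + 2 := by omega
    have e2 : n + 1 + k = (n + k) + 1 := by omega
    rw [e1, hrec (n + k), hrec n]
    have : a * F (n + k + 1) - b * F (n + k) - c * (a * F (n + 1) - b * F n)
        = a * (F (n + 1 + k) - c * F (n + 1)) - b * (F (n + k) - c * F n) := by
      rw [e2]; ring
    rw [this]
    exact dvd_sub (Dvd.dvd.mul_left ih2 a) (Dvd.dvd.mul_left ih1 b)

theorem per_dvd (G : ℕ → ℤ) (M : ℤ) (d : ℕ)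
    (hd : IsLeast {k : ℕ | 0 < k ∧ ∀ n, M ∣ G (n + k) - G n} d)
    (k : ℕ) (hk0 : 0 < k) (hk : ∀ n, M ∣ G (n + k) - G n) : d ∣ k := by
  have hmul : ∀ q n, M ∣ G (n + q * d) - G n := by
    intro q
    induction q with
    | zero => simp
    | succ q ih =>
      intro n
      have e : n + (q + 1) * d = (n + q * d) + d := by ring
      rw [e]
      have := hd.1.2 (n + q * d)
      have := dvd_add this (ih n)
      simpa using this
  have hdpos : 0 < d := hd.1.1
  have hr : ∀ n, M ∣ G (n + k % d) - G n := by
    intro n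
    have h1 := hmul (k / d) (n + k % d)
    have e : n + k % d + k / d * d = n + k := by
      have := Nat.mod_add_div' k d
      omega
    rw [e] at h1
    have h2 := hk n
    have := dvd_sub h2 h1
    simpa using this
  by_contra hnd
  have hrne : k % d ≠ 0 := fun h => hnd (Nat.dvd_of_mod_eq_zero h)
  have hle := hd.2 ⟨Nat.pos_of_ne_zero hrne, hr⟩
  have := Nat.mod_lt k hdpos
  omega

theorem fib_pow_period (a b : ℤ) (F : ℕ → ℤ) (h0 : F 0 = 0) (h1 : F 1 = 1)
    (hrec : ∀ n, F (n + 2) = a * F (n + 1) - b * F n)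
    (p k' : ℕ) (hp1 : (p : ℤ) ∣ F (k' + 1)) (hp2 : (p : ℤ) ∣ F (k' + 1 + 1) - 1) :
    (p : ℤ) ^ 2 ∣ F (p * (k' + 1)) ∧ (p : ℤ) ^ 2 ∣ F (p * (k' + 1) + 1) - 1 := by
  obtain ⟨s, hFK⟩ := hp1
  obtain ⟨t, ht⟩ := hp2
  have hFK1 : F (k' + 1 + 1) = 1 + (p : ℤ) * t := by linarith
  have hbk : b * F k' = a * ((p : ℤ) * s) - (1 + (p : ℤ) * t) := by
    have h := hrec k'
    rw [show k' + 2 = k' + 1 + 1 from rfl] at h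
    rw [hFK1, hFK] at h
    linarith
  have main : ∀ j : ℕ, ∃ u v : ℤ,
      F (j * (k' + 1)) = (j : ℤ) * p * s + (p : ℤ) ^ 2 * u ∧
      F (j * (k' + 1) + 1) = 1 + (j : ℤ) * p * t + (p : ℤ) ^ 2 * v := by
    intro j
    induction j with
    | zero => exact ⟨0, 0, by simp [h0], by simp [h1]⟩
    | succ j ih =>
      obtain ⟨u, v, hu, hv⟩ := ih
      refine ⟨2*j*s*t + p*s*v - a*j*s^2 - a*p*s*u + u + p*u*t,
        j*t^2 + v + p*t*v - b*j*s^2 - b*p*u*s, ?_, ?_⟩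
      · have e : (j + 1) * (k' + 1) = k' + j * (k' + 1) + 1 := by ring
        rw [e, fib_add a b F h0 h1 hrec k' (j * (k' + 1)), hFK, hu, hv, hbk]
        push_cast
        ring
      · have e : (j + 1) * (k' + 1) + 1 = j * (k' + 1) + (k' + 1) + 1 := by ring
        rw [e, fib_add a b F h0 h1 hrec (j * (k' + 1)) (k' + 1), hFK, hFK1, hu, hv]
        push_cast
        ring
  obtain ⟨u, v, hu, hv⟩ := main p
  exact ⟨⟨s + u, by rw [hu]; push_cast; ring⟩, ⟨t + v, by rw [hv]; push_cast; ring⟩⟩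

theorem fib_crux (a b : ℤ) (F : ℕ → ℤ) (h0 : F 0 = 0) (h1 : F 1 = 1)
    (hrec : ∀ n, F (n + 2) = a * F (n + 1) - b * F n)
    (hb : b = 1 ∨ b = -1) (p N' : ℕ) (h : (p : ℤ) ^ 2 ∣ F (N' + 1)) :
    ∀ n, (p : ℤ) ^ 2 ∣ F (n + 4 * (N' + 1)) - F n := by
  have hb2 : b ^ 2 = 1 := by rcases hb with rfl | rfl <;> norm_num
  have hcas := fib_cassini a b F h0 h1 hrec N'
  have hr := hrec N'
  set c := F (N' + 2) with hc
  have hq : (p : ℤ) ^ 2 ∣ c ^ 2 - b ^ (N' + 1) := by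
    have key : c ^ 2 - b ^ (N' + 1)
        = a * c * F (N' + 1) - b * (F (N' + 1) * F (N' + 1)) := by
      linear_combination c * hr - b * hcas
    rw [key]
    exact dvd_sub (h.mul_left (a * c)) ((h.mul_left (F (N' + 1))).mul_left b)
  have hS := fib_shift a b F h0 h1 hrec ((p : ℤ) ^ 2) c (N' + 1) h
    (by rw [show N' + 1 + 1 = N' + 2 from rfl]; simp [hc])
  have hc4 : (p : ℤ) ^ 2 ∣ c ^ 4 - 1 := by
    obtain ⟨w, hw⟩ := hq
    refine ⟨w * (c ^ 2 + b ^ (N' + 1)), ?_⟩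
    have hbsq : (b ^ (N' + 1)) ^ 2 = 1 := by
      rw [← pow_mul, mul_comm, pow_mul, hb2, one_pow]
    linear_combination (c ^ 2 + b ^ (N' + 1)) * hw + hbsq
  intro n
  have s1 := hS (n + 3 * (N' + 1))
  have s2 := hS (n + 2 * (N' + 1))
  have s3 := hS (n + (N' + 1))
  have s4 := hS n
  rw [show n + 3 * (N' + 1) + (N' + 1) = n + 4 * (N' + 1) by ring] at s1
  rw [show n + 2 * (N' + 1) + (N' + 1) = n + 3 * (N' + 1) by ring] at s2
  rw [show n + (N' + 1) + (N' + 1) = n + 2 * (N' + 1) by ring] at s3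
  have key : F (n + 4 * (N' + 1)) - F n =
      (F (n + 4 * (N' + 1)) - c * F (n + 3 * (N' + 1)))
      + c * (F (n + 3 * (N' + 1)) - c * F (n + 2 * (N' + 1)))
      + c ^ 2 * (F (n + 2 * (N' + 1)) - c * F (n + (N' + 1)))
      + c ^ 3 * (F (n + (N' + 1)) - c * F n)
      + (c ^ 4 - 1) * F n := by ring
  rw [key]
  exact dvd_add (dvd_add (dvd_add (dvd_add s1 (s2.mul_left c)) (s3.mul_left (c ^ 2)))
    (s4.mul_left (c ^ 3))) (hc4.mul_right (F n))


/-- for the generalized Fibonacci sequence with `b = ±1` and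
`D = a² - 4b`, and a prime `p ∤ D`, if the minimal period of `F` mod `p`
differs from the minimal period mod `p²`, then `F_{p-(D/p)} ≢ 0 (mod p²)`. -/
theorem period_change_implies_not_wieferich (a b : ℤ) (hb : b = 1 ∨ b = -1)
    (F : ℕ → ℤ) (h0 : F 0 = 0) (h1 : F 1 = 1)
    (hrec : ∀ n, F (n + 2) = a * F (n + 1) - b * F n)
    (p : ℕ) (hp : p.Prime) (hpD : ¬ (p : ℤ) ∣ (a ^ 2 - 4 * b))
    (kp kp2 : ℕ)
    (hkp : IsLeast {k : ℕ | 0 < k ∧ ∀ n, (p : ℤ) ∣ F (n + k) - F n} kp)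
    (hkp2 : IsLeast {k : ℕ | 0 < k ∧ ∀ n, ((p : ℤ) ^ 2) ∣ F (n + k) - F n} kp2)
    (hne : kp ≠ kp2) :
    ¬ (p : ℤ) ^ 2 ∣ F (((p : ℤ) - @legendreSym p ⟨hp⟩ (a ^ 2 - 4 * b)).toNat) := by
  haveI : Fact p.Prime := ⟨hp⟩
  intro h
  have hD0 : ((a ^ 2 - 4 * b : ℤ) : ZMod p) ≠ 0 := by
    rw [Ne, ZMod.intCast_zmod_eq_zero_iff_dvd]
    exact hpD
  have hε1 : legendreSym p (a ^ 2 - 4 * b) = 1 ∨ legendreSym p (a ^ 2 - 4 * b) = -1 :=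
    legendreSym.eq_one_or_neg_one p hD0
  have hp2 : 2 ≤ p := hp.two_le
  rcases eq_or_ne p 2 with hp2eq | hpne2
  · -- p = 2 : the Legendre symbol is 1 and the index is 1
    subst hp2eq
    have hsq : IsSquare ((a ^ 2 - 4 * b : ℤ) : ZMod 2) := by
      have : ∀ x : ZMod 2, IsSquare x := by
        intro x; fin_cases x; exacts [⟨0, rfl⟩, ⟨1, rfl⟩]
      exact this _
    have hεval : legendreSym 2 (a ^ 2 - 4 * b) = 1 :=
      (legendreSym.eq_one_iff 2 hD0).mpr hsq
    rw [hεval] at h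
    norm_num at h
    rw [h1] at h
    norm_num at h
  -- now p is odd
  obtain ⟨ε, hε⟩ : ∃ ε : ℤ, legendreSym p (a ^ 2 - 4 * b) = ε := ⟨_, rfl⟩
  rw [hε] at h hε1
  have hεle : ε ≤ 1 ∧ -1 ≤ ε := by rcases hε1 with h' | h' <;> simp [h']
  have hple : (2 : ℤ) ≤ (p : ℤ) := by exact_mod_cast hp2
  have hNval : ((((p : ℤ) - ε).toNat : ℤ)) = (p : ℤ) - ε := by
    rw [Int.toNat_of_nonneg]; omega
  obtain ⟨N', hN'⟩ : ∃ N', ((p : ℤ) - ε).toNat = N' + 1 := by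
    refine ⟨((p : ℤ) - ε).toNat - 1, ?_⟩
    have : 1 ≤ ((p : ℤ) - ε).toNat := by
      have : (1 : ℤ) ≤ (((p : ℤ) - ε).toNat : ℤ) := by omega
      exact_mod_cast this
    omega
  rw [hN'] at h
  have hN'val : ((N' : ℤ) + 1) = (p : ℤ) - ε := by
    rw [← hNval, hN']; push_cast; ring
  -- period 4N mod p^2
  have hper4 : ∀ n, ((p : ℤ) ^ 2) ∣ F (n + 4 * (N' + 1)) - F n :=
    fib_crux a b F h0 h1 hrec hb p N' h
  -- kp2 ∣ 4 * N
  have hdvd4N : kp2 ∣ 4 * (N' + 1) :=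
    per_dvd F _ kp2 hkp2 _ (by omega) hper4
  -- kp ∣ kp2
  have hkpdvd : kp ∣ kp2 := by
    refine per_dvd F _ kp hkp kp2 hkp2.1.1 ?_
    intro n
    exact dvd_trans (dvd_pow_self (p : ℤ) two_ne_zero) (hkp2.1.2 n)
  -- kp2 ∣ p * kp
  have hkp2dvd : kp2 ∣ p * kp := by
    obtain ⟨k', rfl⟩ : ∃ k', kp = k' + 1 := ⟨kp - 1, by have := hkp.1.1; omega⟩
    have e1 : (p : ℤ) ∣ F (k' + 1) := by
      have := hkp.1.2 0
      simpa [h0] using this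
    have e2 : (p : ℤ) ∣ F (k' + 1 + 1) - 1 := by
      have := hkp.1.2 1
      rw [show 1 + (k' + 1) = k' + 1 + 1 by omega, h1] at this
      exact this
    obtain ⟨f1, f2⟩ := fib_pow_period a b F h0 h1 hrec p k' e1 e2
    have hpos : 0 < p * (k' + 1) := by positivity
    refine per_dvd F _ kp2 hkp2 _ hpos ?_
    intro n
    have := fib_shift a b F h0 h1 hrec ((p : ℤ) ^ 2) 1 (p * (k' + 1)) f1
      (by simpa using f2) n
    simpa using this
  -- p does not divide kp2
  have hpnd : ¬ p ∣ kp2 := by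
    intro hpk
    have hp4N : p ∣ 4 * (N' + 1) := hpk.trans hdvd4N
    have hz : (p : ℤ) ∣ 4 * ((N' : ℤ) + 1) := by exact_mod_cast hp4N
    have hdε : (p : ℤ) ∣ 4 * ε := by
      have h1' : (p : ℤ) ∣ 4 * (p : ℤ) := dvd_mul_left _ _
      rw [hN'val] at hz
      have := dvd_sub h1' hz
      simpa [mul_sub] using this
    have h4 : (p : ℤ) ∣ 4 := by
      rcases hε1 with h' | h' <;> rw [h'] at hdε
      · simpa using hdε
      · rw [show (4 : ℤ) * (-1) = -4 by ring, dvd_neg] at hdε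
        simpa using hdε
    have h4' : p ∣ 4 := by exact_mod_cast h4
    have hple4 : p ≤ 4 := Nat.le_of_dvd (by norm_num) h4'
    have hcase : p = 2 ∨ p = 3 ∨ p = 4 := by omega
    rcases hcase with rfl | rfl | rfl
    · exact hpne2 rfl
    · exact absurd h4' (by norm_num)
    · exact absurd hp (by norm_num)
  have hcop : Nat.Coprime kp2 p :=
    Nat.coprime_comm.mp ((hp.coprime_iff_not_dvd).mpr hpnd)
  have hkp2kp : kp2 ∣ kp := hcop.dvd_of_dvd_mul_left hkp2dvd
  exact hne (Nat.dvd_antisymm hkpdvd hkp2kp)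
end

section
/- Let a, b be integers with gcd(b, p) = 1 for a prime p, and F the sequence F₀ = 0, F₁ = 1, F_{n+2} = a·F_{n+1} - b·F_n. Then the period k(p²) of F modulo p² is equal to either k(p) or p·k(p), where k(p) is the period modulo p. -/
private theorem shift_formula (a b : ℤ) (F : ℕ → ℤ)
    (h0 : F 0 = 0) (h1 : F 1 = 1)
    (hrec : ∀ n, F (n + 2) = a * F (n + 1) - b * F n) :
    ∀ n m, F (m + 1 + n) = F (m + 1) * F (n + 1) - b * F m * F n := by
  intro n
  induction n using Nat.twoStepInduction with
  | zero => intro m; simp [h0, h1]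
  | one =>
      intro m
      have h2 : F 2 = a := by
        have h := hrec 0
        rw [h0, h1] at h
        rw [h]; ring
      show F (m + 1 + 1) = F (m + 1) * F (1 + 1) - b * F m * F 1
      have e : m + 1 + 1 = m + 2 := by omega
      have e2 : (1 : ℕ) + 1 = 2 := by omega
      rw [e, e2, hrec m, h2, h1]; ring
  | more n ih1 ih2 =>
      intro m
      have ih2' := ih2 m
      rw [show m + 1 + (n + 1) = m + 1 + n + 1 from by omega] at ih2'
      rw [show m + 1 + (n + 2) = m + 1 + n + 2 from by omega, hrec, ih2', ih1 m,
        show n + 2 + 1 = (n + 1) + 2 from by omega, hrec (n + 1),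
        show n + 1 + 1 = n + 2 from by omega, hrec n]
      ring

private theorem period_of_ends (a b : ℤ) (F : ℕ → ℤ)
    (h0 : F 0 = 0) (h1 : F 1 = 1)
    (hrec : ∀ n, F (n + 2) = a * F (n + 1) - b * F n)
    (M : ℤ) (k : ℕ) (hk : 0 < k) (hA : M ∣ F k) (hB : M ∣ F (k + 1) - 1) :
    ∀ n, M ∣ F (n + k) - F n := by
  obtain ⟨m, rfl⟩ : ∃ m, k = m + 1 := ⟨k - 1, by omega⟩
  have hB' : M ∣ a * F (m + 1) - b * F m - 1 := by
    have e : m + 1 + 1 = m + 2 := by omega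
    rw [e, hrec m] at hB
    exact hB
  have hu : M ∣ b * F m + 1 := by
    have h2 := (hA.mul_left a).sub hB'
    have e : a * F (m + 1) - (a * F (m + 1) - b * F m - 1) = b * F m + 1 := by ring
    rwa [e] at h2
  intro n
  have hs := shift_formula a b F h0 h1 hrec n m
  have e : n + (m + 1) = m + 1 + n := by omega
  rw [e, hs]
  have key : F (m + 1) * F (n + 1) - b * F m * F n - F n
      = F (m + 1) * F (n + 1) - (b * F m + 1) * F n := by ring
  rw [key]
  exact (hA.mul_right _).sub (hu.mul_right _)

private theorem mul_period (F : ℕ → ℤ) (M : ℤ) (k : ℕ)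
    (hk : ∀ n, M ∣ F (n + k) - F n) : ∀ j n, M ∣ F (n + j * k) - F n := by
  intro j
  induction j with
  | zero => simp
  | succ j ih =>
      intro n
      have h1 := hk (n + j * k)
      have h2 := ih n
      have e : n + (j + 1) * k = n + j * k + k := by ring
      rw [e]
      have key : F (n + j * k + k) - F n
          = (F (n + j * k + k) - F (n + j * k)) + (F (n + j * k) - F n) := by ring
      rw [key]
      exact h1.add h2

private theorem min_period_dvd (F : ℕ → ℤ) (M : ℤ) (kp : ℕ)
    (hkp : IsLeast {k : ℕ | 0 < k ∧ ∀ n, M ∣ F (n + k) - F n} kp)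
    (k : ℕ) (hper : ∀ n, M ∣ F (n + k) - F n) : kp ∣ k := by
  have hpos : 0 < kp := hkp.1.1
  have hmod := Nat.div_add_mod k kp
  by_cases hr : k % kp = 0
  · exact Nat.dvd_of_mod_eq_zero hr
  · exfalso
    have hrper : ∀ n, M ∣ F (n + k % kp) - F n := by
      intro n
      have h1 := mul_period F M kp hkp.1.2 (k / kp) (n + k % kp)
      have e : n + k % kp + k / kp * kp = n + k := by
        conv_rhs => rw [← hmod]
        ring
      rw [e] at h1
      have h2 := hper n
      have key : F (n + k % kp) - F n
          = (F (n + k) - F n) - (F (n + k) - F (n + k % kp)) := by ring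
      rw [key]
      exact h2.sub h1
    have hle : kp ≤ k % kp := hkp.2 ⟨Nat.pos_of_ne_zero hr, hrper⟩
    have hlt : k % kp < kp := Nat.mod_lt _ hpos
    omega

private theorem pow_period_aux (a b : ℤ) (F : ℕ → ℤ)
    (h0 : F 0 = 0) (h1 : F 1 = 1)
    (hrec : ∀ n, F (n + 2) = a * F (n + 1) - b * F n)
    (M : ℤ) (k : ℕ) (hk : 0 < k) (hA : M ∣ F k) (hB : M ∣ F (k + 1) - 1) :
    ∀ j : ℕ, M ^ 2 ∣ F (j * k) - (j : ℤ) * F k ∧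
      M ^ 2 ∣ F (j * k + 1) - 1 - (j : ℤ) * (F (k + 1) - 1) := by
  obtain ⟨m, rfl⟩ : ∃ m, k = m + 1 := ⟨k - 1, by omega⟩
  have hB' : M ∣ a * F (m + 1) - b * F m - 1 := by
    have e : m + 1 + 1 = m + 2 := by omega
    have hB2 := hB
    rw [e, hrec m] at hB2
    exact hB2
  have hu : M ∣ b * F m + 1 := by
    have h2 := (hA.mul_left a).sub hB'
    have e : a * F (m + 1) - (a * F (m + 1) - b * F m - 1) = b * F m + 1 := by ring
    rwa [e] at h2
  have hMM : ∀ x y : ℤ, M ∣ x → M ∣ y → M ^ 2 ∣ x * y := by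
    intro x y hx hy
    rw [sq]
    exact mul_dvd_mul hx hy
  intro j
  induction j with
  | zero => constructor <;> simp [h0, h1]
  | succ j ih =>
      obtain ⟨ihx, ihy⟩ := ih
      constructor
      · have e : (j + 1) * (m + 1) = m + 1 + j * (m + 1) := by ring
        rw [e, shift_formula a b F h0 h1 hrec (j * (m + 1)) m]
        have d1 : M ^ 2 ∣ F (m + 1) *
            (F (j * (m + 1) + 1) - 1 - (j : ℤ) * (F (m + 1 + 1) - 1)) := ihy.mul_left _
        have d2 : M ^ 2 ∣ b * F m * (F (j * (m + 1)) - (j : ℤ) * F (m + 1)) := ihx.mul_left _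
        have d3 : M ^ 2 ∣ (j : ℤ) * (F (m + 1) * (F (m + 1 + 1) - 1)) :=
          (hMM _ _ hA hB).mul_left _
        have d4 : M ^ 2 ∣ (j : ℤ) * (F (m + 1) * (b * F m + 1)) :=
          (hMM _ _ hA hu).mul_left _
        have key : F (m + 1) * F (j * (m + 1) + 1) - b * F m * F (j * (m + 1))
            - ((j : ℤ) + 1) * F (m + 1)
            = F (m + 1) * (F (j * (m + 1) + 1) - 1 - (j : ℤ) * (F (m + 1 + 1) - 1))
              - b * F m * (F (j * (m + 1)) - (j : ℤ) * F (m + 1))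
              + (j : ℤ) * (F (m + 1) * (F (m + 1 + 1) - 1))
              - (j : ℤ) * (F (m + 1) * (b * F m + 1)) := by ring
        push_cast
        rw [key]
        exact ((d1.sub d2).add d3).sub d4
      · have e : (j + 1) * (m + 1) + 1 = (m + 1) + 1 + j * (m + 1) := by ring
        rw [e, shift_formula a b F h0 h1 hrec (j * (m + 1)) (m + 1)]
        have d1 : M ^ 2 ∣ F (m + 1 + 1) *
            (F (j * (m + 1) + 1) - 1 - (j : ℤ) * (F (m + 1 + 1) - 1)) := ihy.mul_left _
        have d2 : M ^ 2 ∣ b * F (m + 1) * (F (j * (m + 1)) - (j : ℤ) * F (m + 1)) :=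
          ihx.mul_left _
        have d3 : M ^ 2 ∣ (j : ℤ) * ((F (m + 1 + 1) - 1) * (F (m + 1 + 1) - 1)) :=
          (hMM _ _ hB hB).mul_left _
        have d4 : M ^ 2 ∣ (j : ℤ) * (b * (F (m + 1) * F (m + 1))) :=
          ((hMM _ _ hA hA).mul_left b).mul_left _
        have key : F (m + 1 + 1) * F (j * (m + 1) + 1) - b * F (m + 1) * F (j * (m + 1))
            - 1 - ((j : ℤ) + 1) * (F (m + 1 + 1) - 1)
            = F (m + 1 + 1) * (F (j * (m + 1) + 1) - 1 - (j : ℤ) * (F (m + 1 + 1) - 1))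
              - b * F (m + 1) * (F (j * (m + 1)) - (j : ℤ) * F (m + 1))
              + (j : ℤ) * ((F (m + 1 + 1) - 1) * (F (m + 1 + 1) - 1))
              - (j : ℤ) * (b * (F (m + 1) * F (m + 1))) := by ring
        push_cast
        rw [key]
        exact ((d1.sub d2).add d3).sub d4

/-- for the generalized Fibonacci sequence with `gcd(b, p) = 1`,
the minimal period modulo `p²` equals either the minimal period modulo `p` or
`p` times it. -/
theorem period_mod_p_squared_dichotomy (a b : ℤ) (F : ℕ → ℤ)
    (h0 : F 0 = 0) (h1 : F 1 = 1)
    (hrec : ∀ n, F (n + 2) = a * F (n + 1) - b * F n)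
    (p : ℕ) (hp : p.Prime) (hcop : IsCoprime b (p : ℤ))
    (kp kp2 : ℕ)
    (hkp : IsLeast {k : ℕ | 0 < k ∧ ∀ n, (p : ℤ) ∣ F (n + k) - F n} kp)
    (hkp2 : IsLeast {k : ℕ | 0 < k ∧ ∀ n, ((p : ℤ) ^ 2) ∣ F (n + k) - F n} kp2) :
    kp2 = kp ∨ kp2 = p * kp := by
  have hppos : 0 < p := hp.pos
  have hkppos : 0 < kp := hkp.1.1
  -- endpoint facts for kp mod p
  have hAp : (p : ℤ) ∣ F kp := by
    have h := hkp.1.2 0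
    rw [Nat.zero_add, h0, sub_zero] at h
    exact h
  have hBp : (p : ℤ) ∣ F (kp + 1) - 1 := by
    have h := hkp.1.2 1
    rw [show 1 + kp = kp + 1 from Nat.add_comm 1 kp, h1] at h
    exact h
  -- p * kp is a period mod p^2
  have hkey := pow_period_aux a b F h0 h1 hrec (p : ℤ) kp hkppos hAp hBp p
  have hA2 : ((p : ℤ)) ^ 2 ∣ F (p * kp) := by
    have h1' := hkey.1
    have h2' : ((p : ℤ)) ^ 2 ∣ (p : ℤ) * F kp := by
      rw [sq]; exact mul_dvd_mul_left _ hAp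
    have key : F (p * kp) = (F (p * kp) - (p : ℤ) * F kp) + (p : ℤ) * F kp := by ring
    rw [key]
    exact h1'.add h2'
  have hB2 : ((p : ℤ)) ^ 2 ∣ F (p * kp + 1) - 1 := by
    have h1' := hkey.2
    have h2' : ((p : ℤ)) ^ 2 ∣ (p : ℤ) * (F (kp + 1) - 1) := by
      rw [sq]; exact mul_dvd_mul_left _ hBp
    have key : F (p * kp + 1) - 1
        = (F (p * kp + 1) - 1 - (p : ℤ) * (F (kp + 1) - 1)) + (p : ℤ) * (F (kp + 1) - 1) := by
      ring
    rw [key]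
    exact h1'.add h2'
  have hper : ∀ n, ((p : ℤ)) ^ 2 ∣ F (n + p * kp) - F n :=
    period_of_ends a b F h0 h1 hrec ((p : ℤ) ^ 2) (p * kp)
      (Nat.mul_pos hppos hkppos) hA2 hB2
  have hdvd1 : kp2 ∣ p * kp := min_period_dvd F ((p : ℤ) ^ 2) kp2 hkp2 (p * kp) hper
  have hdvd2 : kp ∣ kp2 := by
    refine min_period_dvd F (p : ℤ) kp hkp kp2 ?_
    intro n
    exact dvd_trans (dvd_pow_self (p : ℤ) two_ne_zero) (hkp2.1.2 n)
  obtain ⟨d, rfl⟩ := hdvd2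
  have hd : d ∣ p := by
    have h := hdvd1
    rw [mul_comm p kp] at h
    exact (Nat.mul_dvd_mul_iff_left hkppos).mp h
  rcases (Nat.Prime.eq_one_or_self_of_dvd hp d hd) with rfl | rfl
  · left; rw [Nat.mul_one]
  · right; rw [Nat.mul_comm]
end

section
/- Let ε be a unit with conjugate ε̄ in the ring of integers of a real quadratic field, F_n = (εⁿ - ε̄ⁿ)/(ε - ε̄), and p an odd prime not dividing (ε - ε̄)². If p splits and F_{p-1} ≡ 0 mod p², or if p is inert and F_{p+1} ≡ 0 mod p², then ε^{p^r - 1} ≡ 1 mod p², where r = 1 in the split case and r = 2 in the inert case. -/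
open NumberField Polynomial

lemma conj_unit_sq (K : Type*) [Field K] [NumberField K]
    (hdeg : Module.finrank ℚ K = 2)
    (σ : K ≃ₐ[ℚ] K)
    (ε εb : 𝓞 K) (hε : IsUnit ε) (hconj : (εb : K) = σ (ε : K))
    (hne : ε ≠ εb) : (ε * εb) ^ 2 = 1 := by
  set e : K := (ε : K) with he
  have heK : e ≠ (εb : K) := fun h => hne (RingOfIntegers.ext h.symm).symm
  -- ε is not rational
  have hnr : e ∉ (algebraMap ℚ K).range := by
    rintro ⟨r, hr⟩
    apply heK
    rw [hconj, ← hr]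
    exact (σ.commutes r).symm
  have hint : IsIntegral ℚ e := IsIntegral.of_finite ℚ e
  set q : ℚ[X] := minpoly ℚ e with hq
  have hq2 : q.natDegree = 2 := by
    have hdvd : q.natDegree ∣ 2 := hdeg ▸ minpoly.degree_dvd hint
    have h1 : q.natDegree ≠ 1 := fun h => hnr ((minpoly.natDegree_eq_one_iff).mp h)
    have h0 : 0 < q.natDegree := minpoly.natDegree_pos hint
    have h2 : q.natDegree ≤ 2 := Nat.le_of_dvd two_pos hdvd
    omega
  -- εb is a unit
  have hεbu : IsUnit εb := by
    obtain ⟨u, hu⟩ := hε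
    have hint2 : IsIntegral ℤ (σ (((u⁻¹ : (𝓞 K)ˣ) : 𝓞 K) : K)) :=
      (RingOfIntegers.isIntegral_coe _).map ((σ : K →ₐ[ℚ] K).restrictScalars ℤ)
    refine IsUnit.of_mul_eq_one (a := εb) ⟨_, hint2⟩ (RingOfIntegers.ext ?_)
    show (εb : K) * σ (((u⁻¹ : (𝓞 K)ˣ) : 𝓞 K) : K) = ((1 : 𝓞 K) : K)
    push_cast [hconj]
    show σ e * σ _ = 1
    rw [← map_mul, ← map_one σ]
    congr 1
    have : ((u : 𝓞 K) : K) * (((u⁻¹ : (𝓞 K)ˣ) : 𝓞 K) : K) = 1 := by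
      rw [← map_mul]
      simp
    rw [he, ← hu]
    exact this
  -- both e and eb are roots of Q, the map of the minpoly
  set Q : K[X] := q.map (algebraMap ℚ K) with hQ
  have hQmonic : Q.Monic := (minpoly.monic hint).map _
  have hQdeg : Q.natDegree = 2 := by rw [hQ, natDegree_map]; exact hq2
  have hroote : Q.IsRoot e := by
    rw [IsRoot, hQ, eval_map, ← aeval_def]
    exact minpoly.aeval ℚ e
  have hrooteb : Q.IsRoot (εb : K) := by
    have h1 : aeval ((σ : K →ₐ[ℚ] K) e) q = (σ : K →ₐ[ℚ] K) (aeval e q) :=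
      aeval_algHom_apply (σ : K →ₐ[ℚ] K) e q
    rw [IsRoot, hQ, eval_map, ← aeval_def, hconj]
    exact h1.trans (by rw [show (aeval e) q = 0 from minpoly.aeval ℚ e, map_zero])
  obtain ⟨R, hR⟩ := (dvd_iff_isRoot.mpr hroote)
  have hRmonic : R.Monic := (monic_X_sub_C e).of_mul_monic_left (hR ▸ hQmonic)
  have hRdeg : R.natDegree = 1 := by
    have := hR ▸ hQdeg
    rw [natDegree_mul (X_sub_C_ne_zero e) hRmonic.ne_zero, natDegree_X_sub_C] at this
    omega
  have hReq : R = X + C (R.coeff 0) := hRmonic.eq_X_add_C hRdeg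
  have hcoeff : R.coeff 0 = -(εb : K) := by
    have h0 := hrooteb
    rw [IsRoot, hR, eval_mul, hReq] at h0
    simp only [eval_add, eval_X, eval_C, eval_sub] at h0
    rcases mul_eq_zero.mp h0 with h | h
    · exact absurd (by linear_combination h) heK.symm
    · linear_combination h
  -- the constant coefficient of q equals e * eb
  have hc : algebraMap ℚ K (q.coeff 0) = e * (εb : K) := by
    have h1 : Q.coeff 0 = algebraMap ℚ K (q.coeff 0) := (coeff_map _ 0)
    have h2 : Q.coeff 0 = e * (εb : K) := by
      rw [hR, mul_coeff_zero, hReq, hcoeff]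
      simp
    rw [← h1, h2]
  -- the product is a rational integer unit
  set c : ℚ := q.coeff 0 with hcdef
  have hNu : IsUnit (ε * εb) := hε.mul hεbu
  obtain ⟨v, hv⟩ : ∃ v : 𝓞 K, (ε * εb) * v = 1 := by
    obtain ⟨w, hw⟩ := hNu
    exact ⟨((w⁻¹ : (𝓞 K)ˣ) : 𝓞 K), by rw [← hw]; simp⟩
  have hcK : algebraMap ℚ K c = ((ε * εb : 𝓞 K) : K) := by
    rw [hc]; push_cast; ring
  have hcint : IsIntegral ℤ c :=
    (isIntegral_algebraMap_iff (algebraMap ℚ K).injective).mp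
      (hcK ▸ RingOfIntegers.isIntegral_coe (ε * εb))
  have h1 : ((ε * εb : 𝓞 K) : K) * ((v : 𝓞 K) : K) = 1 := by
    rw [← map_mul, hv]; simp
  have hc0 : c ≠ 0 := by
    intro h
    rw [← hcK, h, map_zero, zero_mul] at h1
    exact one_ne_zero h1.symm
  have hvK : algebraMap ℚ K c⁻¹ = ((v : 𝓞 K) : K) := by
    have h2 : algebraMap ℚ K c * ((v : 𝓞 K) : K) = 1 := by rw [hcK]; exact h1
    rw [map_inv₀]
    exact inv_eq_of_mul_eq_one_right h2
  have hvint : IsIntegral ℤ (c⁻¹ : ℚ) :=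
    (isIntegral_algebraMap_iff (algebraMap ℚ K).injective).mp
      (hvK ▸ RingOfIntegers.isIntegral_coe v)
  obtain ⟨a, ha⟩ := IsIntegrallyClosed.isIntegral_iff.mp hcint
  obtain ⟨b, hb⟩ := IsIntegrallyClosed.isIntegral_iff.mp hvint
  have hab : a * b = 1 := by
    have : (algebraMap ℤ ℚ) (a * b) = (algebraMap ℤ ℚ) 1 := by
      rw [map_mul, ha, hb, map_one, mul_inv_cancel₀ hc0]
    exact (algebraMap ℤ ℚ).injective_int this
  have ha1 : a = 1 ∨ a = -1 := Int.isUnit_iff.mp (IsUnit.of_mul_eq_one (a := a) b hab)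
  have hc2 : c ^ 2 = 1 := by
    rcases ha1 with h | h <;> rw [← ha, h] <;> norm_num
  have hfin : ((ε * εb : 𝓞 K) : K) ^ 2 = 1 := by
    rw [← hcK, ← map_pow, hc2, map_one]
  refine RingOfIntegers.ext ?_
  push_cast at hfin ⊢
  exact hfin

lemma step_sq {R : Type*} [CommRing R] (ε εb w d : R)
    (hN2 : (ε * εb) ^ 2 = 1) (hw : ε * w = 1) (m : ℕ)
    (h : d ∣ ε ^ (2 * m) - εb ^ (2 * m)) : d ∣ ε ^ (4 * m) - 1 := by
  have h1 : εb ^ (2 * m) = w ^ (2 * m) := by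
    have h2 : εb ^ (2 * m) * (ε * w) ^ (2 * m) = ((ε * εb) ^ 2) ^ m * w ^ (2 * m) := by
      ring
    rw [hw, hN2] at h2
    simpa using h2
  have h4 : ε ^ (2 * m) * w ^ (2 * m) = 1 := by rw [← mul_pow, hw, one_pow]
  have h3 : ε ^ (2 * m) * (ε ^ (2 * m) - εb ^ (2 * m)) = ε ^ (4 * m) - 1 := by
    rw [h1]
    linear_combination -h4
  exact h3 ▸ (h.mul_left _)

set_option synthInstance.maxHeartbeats 1000000 in
lemma fermat_little_quot (K : Type*) [Field K] [NumberField K]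
    (P : Ideal (𝓞 K)) (hP : P.IsMaximal) (p : ℕ) (hp : p.Prime)
    (hcard : Nat.card ((𝓞 K) ⧸ P) = p) (ε : 𝓞 K) (hε : IsUnit ε) :
    ε ^ (p - 1) - 1 ∈ P := by
  letI := Ideal.Quotient.field P
  have hfin : Finite ((𝓞 K) ⧸ P) := Nat.finite_of_card_ne_zero (hcard ▸ hp.ne_zero)
  letI := Fintype.ofFinite ((𝓞 K) ⧸ P)
  have hc : Fintype.card ((𝓞 K) ⧸ P) = p := by rw [← Nat.card_eq_fintype_card, hcard]
  have hx : (Ideal.Quotient.mk P ε) ≠ 0 := (hε.map (Ideal.Quotient.mk P)).ne_zero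
  have h := FiniteField.pow_card_sub_one_eq_one (Ideal.Quotient.mk P ε) hx
  rw [hc] at h
  rw [← Ideal.Quotient.eq_zero_iff_mem, map_sub, map_pow, map_one, h, sub_self]

lemma norm_span_p (K : Type*) [Field K] [NumberField K]
    (hdeg : Module.finrank ℚ K = 2) (p : ℕ) :
    Ideal.absNorm (Ideal.span {(p : 𝓞 K)}) = p ^ 2 := by
  rw [Ideal.absNorm_span_singleton]
  have h1 : (p : 𝓞 K) = algebraMap ℤ (𝓞 K) (p : ℤ) := by push_cast; rfl
  rw [h1, Algebra.norm_algebraMap_of_basis (RingOfIntegers.basis K)]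

  have h2 : Fintype.card (Module.Free.ChooseBasisIndex ℤ (𝓞 K)) = 2 := by
    rw [← Module.finrank_eq_card_chooseBasisIndex, RingOfIntegers.rank, hdeg]
  rw [h2]
  simp [Int.natAbs_pow]

lemma span_dvd_span_iff {A : Type*} [CommRing A] [IsDomain A] [IsDedekindDomain A] {a b : A} :
    Ideal.span {a} ∣ Ideal.span ({b} : Set A) ↔ a ∣ b := by
  rw [Ideal.dvd_iff_le, Ideal.span_singleton_le_span_singleton]

set_option maxHeartbeats 1000000 in
set_option synthInstance.maxHeartbeats 1000000 in
/-- `K` a real quadratic field, `ε` a unit with conjugate `ε̄`,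
`F_n = (εⁿ - ε̄ⁿ)/(ε - ε̄)`, and `p` an odd prime with `p ∤ (ε - ε̄)²`.
If `p` splits and `F_{p-1} ≡ 0 (mod p²)` then `ε^{p-1} ≡ 1 (mod p²)`; and if
`p` is inert and `F_{p+1} ≡ 0 (mod p²)` then `ε^{p²-1} ≡ 1 (mod p²)`. -/
theorem fib_wieferich_implies_unit_wieferich
    (K : Type*) [Field K] [NumberField K]
    (hdeg : Module.finrank ℚ K = 2) (f : K →+* ℝ)
    (σ : K ≃ₐ[ℚ] K) (hσ : σ ≠ AlgEquiv.refl)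
    (ε εb : 𝓞 K) (hε : IsUnit ε) (hconj : (εb : K) = σ (ε : K))
    (p : ℕ) (hp : p.Prime) (hodd : p ≠ 2)
    (hnd : ¬ (p : 𝓞 K) ∣ (ε - εb) ^ 2)
    (F : ℕ → 𝓞 K) (hF : ∀ n, (ε - εb) * F n = ε ^ n - εb ^ n) :
    ((∃ P Q : Ideal (𝓞 K), P.IsPrime ∧ Q.IsPrime ∧ P ≠ Q ∧
        Ideal.span {(p : 𝓞 K)} = P * Q) →
      (p : 𝓞 K) ^ 2 ∣ F (p - 1) → (p : 𝓞 K) ^ 2 ∣ ε ^ (p - 1) - 1) ∧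
    ((Ideal.span {(p : 𝓞 K)}).IsPrime →
      (p : 𝓞 K) ^ 2 ∣ F (p + 1) → (p : 𝓞 K) ^ 2 ∣ ε ^ (p ^ 2 - 1) - 1) := by
  have hne : ε ≠ εb := by
    rintro rfl
    exact hnd (by simp)
  have hN2 : (ε * εb) ^ 2 = 1 := conj_unit_sq K hdeg σ ε εb hε hconj hne
  obtain ⟨u, hu⟩ := hε
  set w : 𝓞 K := ((u⁻¹ : (𝓞 K)ˣ) : 𝓞 K) with hwdef
  have hw : ε * w = 1 := by
    rw [← hu, hwdef]
    exact_mod_cast u.mul_inv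
  have hε : IsUnit ε := ⟨u, hu⟩
  have hpm : p % 2 = 1 := Nat.odd_iff.mp (hp.odd_of_ne_two hodd)
  set t : ℕ := p / 2 with htdef
  have ht : p = 2 * t + 1 := by omega
  constructor
  · -- split case
    rintro ⟨P, Q, hP, hQ, hPQ, hsplit⟩ hdiv
    have hp1 : p - 1 = 2 * t := by omega
    -- divisibility of (A-1)(A+1)
    have hd1 : (p : 𝓞 K) ^ 2 ∣ ε ^ (2 * t) - εb ^ (2 * t) := by
      rw [← hp1, ← hF (p - 1)]
      exact hdiv.mul_left _
    have hd2 : (p : 𝓞 K) ^ 2 ∣ ε ^ (4 * t) - 1 := step_sq ε εb w _ hN2 hw t hd1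
    have hfact : ε ^ (4 * t) - 1 = (ε ^ (2 * t) - 1) * (ε ^ (2 * t) + 1) := by ring
    have hd3 : (p : 𝓞 K) ^ 2 ∣ (ε ^ (2 * t) - 1) * (ε ^ (2 * t) + 1) := hfact ▸ hd2
    -- basic ideal facts
    have hpne : (p : 𝓞 K) ≠ 0 := Nat.cast_ne_zero.mpr hp.ne_zero
    have hspanbot : Ideal.span {(p : 𝓞 K)} ≠ ⊥ := by
      simpa [Ideal.span_singleton_eq_bot] using hpne
    have hPbot : P ≠ ⊥ := by rintro rfl; exact hspanbot (by rw [hsplit]; simp)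
    have hQbot : Q ≠ ⊥ := by rintro rfl; exact hspanbot (by rw [hsplit]; simp)
    have hPmax : P.IsMaximal := hP.isMaximal hPbot
    have hQmax : Q.IsMaximal := hQ.isMaximal hQbot
    -- norms and cardinalities
    have hn : Ideal.absNorm (Ideal.span {(p : 𝓞 K)}) = p ^ 2 := norm_span_p K hdeg p
    have hmul : Ideal.absNorm P * Ideal.absNorm Q = p ^ 2 := by
      rw [← _root_.map_mul, ← hsplit, hn]
    have haP : Ideal.absNorm P ≠ 1 := fun h => hP.ne_top (Ideal.absNorm_eq_one_iff.mp h)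
    have haQ : Ideal.absNorm Q ≠ 1 := fun h => hQ.ne_top (Ideal.absNorm_eq_one_iff.mp h)
    have cardeq : ∀ a b : ℕ, a * b = p ^ 2 → a ≠ 1 → b ≠ 1 → a = p := by
      intro a b hab ha hb
      have hd : a ∣ p ^ 2 := ⟨b, hab.symm⟩
      obtain ⟨k, hk, rfl⟩ := (Nat.dvd_prime_pow hp).mp hd
      interval_cases k
      · simp at ha
      · rw [pow_one]
      · exfalso
        apply hb
        have hpos : 0 < p ^ 2 := pow_pos hp.pos 2
        exact Nat.eq_of_mul_eq_mul_left hpos (by rw [hab, mul_one])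
    have hcardP : Nat.card ((𝓞 K) ⧸ P) = p := by
      have h1 : Ideal.absNorm P = Nat.card ((𝓞 K) ⧸ P) := by
        rw [Ideal.absNorm_apply, Submodule.cardQuot_apply]
      rw [← h1]
      exact cardeq _ _ hmul haP haQ
    have hcardQ : Nat.card ((𝓞 K) ⧸ Q) = p := by
      have h1 : Ideal.absNorm Q = Nat.card ((𝓞 K) ⧸ Q) := by
        rw [Ideal.absNorm_apply, Submodule.cardQuot_apply]
      rw [← h1]
      exact cardeq _ _ (by rw [mul_comm]; exact hmul) haQ haP
    -- Fermat's little theorem in each residue field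
    have hFP : ε ^ (2 * t) - 1 ∈ P := by
      rw [← hp1]; exact fermat_little_quot K P hPmax p hp hcardP ε hε
    have hFQ : ε ^ (2 * t) - 1 ∈ Q := by
      rw [← hp1]; exact fermat_little_quot K Q hQmax p hp hcardQ ε hε
    -- P and Q do not contain A + 1
    have hnotmem : ∀ R : Ideal (𝓞 K), R.IsPrime → (p : 𝓞 K) ∈ R → ε ^ (2 * t) - 1 ∈ R →
        ε ^ (2 * t) + 1 ∉ R := by
      intro R hR hpP hmem1 hmem2
      have h2 : (2 : 𝓞 K) ∈ R := by
        have h3 := R.sub_mem hmem2 hmem1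
        have h4 : (ε ^ (2 * t) + 1) - (ε ^ (2 * t) - 1) = 2 := by ring
        rwa [h4] at h3
      have hone : (1 : 𝓞 K) ∈ R := by
        have h5 : (1 : 𝓞 K) = (p : 𝓞 K) - (t : 𝓞 K) * 2 := by
          rw [show ((p : ℕ) : 𝓞 K) = ((2 * t + 1 : ℕ) : 𝓞 K) from by rw [← ht]]
          push_cast
          ring
        rw [h5]
        exact R.sub_mem hpP (R.mul_mem_left _ h2)
      exact hR.ne_top ((Ideal.eq_top_iff_one R).mpr hone)
    have hpinP : (p : 𝓞 K) ∈ P := Ideal.mul_le_left (J := Q) (by rw [← hsplit]; exact Ideal.mem_span_singleton_self _)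
    have hpinQ : (p : 𝓞 K) ∈ Q := Ideal.mul_le_right (I := P) (by rw [← hsplit]; exact Ideal.mem_span_singleton_self _)
    -- ideal divisibility
    have hPprime : Prime P := (Ideal.prime_iff_isPrime hPbot).mpr hP
    have hQprime : Prime Q := (Ideal.prime_iff_isPrime hQbot).mpr hQ
    set I : Ideal (𝓞 K) := Ideal.span {ε ^ (2 * t) - 1} with hIdef
    set J : Ideal (𝓞 K) := Ideal.span {ε ^ (2 * t) + 1} with hJdef
    have hIJ : P ^ 2 * Q ^ 2 ∣ I * J := by
      rw [← mul_pow, ← hsplit, Ideal.span_singleton_pow, hIdef, hJdef,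
        Ideal.span_singleton_mul_span_singleton]
      exact span_dvd_span_iff.mpr hd3
    have hPnotJ : ¬ P ∣ J := by
      intro h
      exact hnotmem P hP hpinP hFP ((Ideal.span_singleton_le_iff_mem _).mp (Ideal.dvd_iff_le.mp h))
    have hQnotJ : ¬ Q ∣ J := by
      intro h
      exact hnotmem Q hQ hpinQ hFQ ((Ideal.span_singleton_le_iff_mem _).mp (Ideal.dvd_iff_le.mp h))
    have hPI : P ^ 2 ∣ I :=
      hPprime.pow_dvd_of_dvd_mul_right 2 hPnotJ ((dvd_mul_right _ _).trans hIJ)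
    have hQI : Q ^ 2 ∣ I :=
      hQprime.pow_dvd_of_dvd_mul_right 2 hQnotJ ((dvd_mul_left _ _).trans hIJ)
    obtain ⟨M, hM⟩ := hPI
    have hQnotP2 : ¬ Q ∣ P ^ 2 := by
      intro h
      have h1 : Q ∣ P := hQprime.dvd_of_dvd_pow h
      exact hPQ (hPmax.eq_of_le hQ.ne_top (Ideal.dvd_iff_le.mp h1))
    have hQM : Q ^ 2 ∣ M := hQprime.pow_dvd_of_dvd_mul_left 2 hQnotP2 (hM ▸ hQI)
    have hfinal : P ^ 2 * Q ^ 2 ∣ I := hM ▸ mul_dvd_mul_left (P ^ 2) hQM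
    have : (p : 𝓞 K) ^ 2 ∣ ε ^ (2 * t) - 1 := by
      rw [← span_dvd_span_iff, ← Ideal.span_singleton_pow]
      rw [hsplit, mul_pow]
      exact hfinal
    rwa [hp1]
  · -- inert case
    rintro - hdiv
    have hp2 : p + 1 = 2 * (t + 1) := by omega
    have hd1 : (p : 𝓞 K) ^ 2 ∣ ε ^ (2 * (t + 1)) - εb ^ (2 * (t + 1)) := by
      rw [← hp2, ← hF (p + 1)]
      exact hdiv.mul_left _
    have hd2 : (p : 𝓞 K) ^ 2 ∣ ε ^ (4 * (t + 1)) - 1 := step_sq ε εb w _ hN2 hw (t + 1) hd1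
    have h5 : ε ^ (p ^ 2 - 1) = (ε ^ (4 * (t + 1))) ^ t := by
      rw [← pow_mul]
      congr 1
      have h6 : p ^ 2 = 4 * (t + 1) * t + 1 := by rw [ht]; ring
      omega
    have hdvd2 : ε ^ (4 * (t + 1)) - 1 ∣ ε ^ (p ^ 2 - 1) - 1 := by
      rw [h5]
      simpa using sub_dvd_pow_sub_pow (ε ^ (4 * (t + 1))) 1 t
    exact hd2.trans hdvd2
end
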